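/- arXiv:2209.11543 — 3 statements merged into one kernel-verified Lean document; each statement's English description precedes it below -/
import Mathlib

section
/- Let A be a braided Hopf algebra in Yetter–Drinfeld modules over H, K ⊆ A a left coideal subalgebra in left H-comodules, and U a left A-comodule in the category of left H-comodules. Then U ⊗ K, equipped with the diagonal left H-coaction, the half-braided diagonal left A-coaction δ(u ⊗ k) = u⁽⁻¹⁾(u⁽⁰⁾₍₋₁₎ · k⁽¹⁾) ⊗ u⁽⁰⁾₍₀₎ ⊗ k⁽²⁾, and the right K-action by multiplication on the second tensor factor, is a Hopf module in the category of left H-comodules: the A-coaction is right K-linear with respect to the half-braided diagonal K-action on A ⊗ (U ⊗ K). -/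
open TensorProduct LinearMap

universe u
set_option maxHeartbeats 1000000

section Prelude

variable (k : Type u) [Field k]

/-- A left comodule structure map over a coalgebra-like datum `(Δ, ε)` on `C`. -/
structure IsComod {C V : Type u} [AddCommGroup C] [Module k C]
    [AddCommGroup V] [Module k V]
    (ρ : V →ₗ[k] C ⊗[k] V) (Δ : C →ₗ[k] C ⊗[k] C) (ε : C →ₗ[k] k) : Prop where
  counit : (TensorProduct.lid k V).toLinearMap ∘ₗ ε.rTensor V ∘ₗ ρ = LinearMap.id
  coassoc : Δ.rTensor V ∘ₗ ρ
      = (TensorProduct.assoc k C C V).symm.toLinearMap ∘ₗ ρ.lTensor C ∘ₗ ρ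

/-- A right comodule structure map. -/
structure IsRightComod {C V : Type u} [AddCommGroup C] [Module k C]
    [AddCommGroup V] [Module k V]
    (ρ : V →ₗ[k] V ⊗[k] C) (Δ : C →ₗ[k] C ⊗[k] C) (ε : C →ₗ[k] k) : Prop where
  counit : (TensorProduct.rid k V).toLinearMap ∘ₗ ε.lTensor V ∘ₗ ρ = LinearMap.id
  coassoc : Δ.lTensor V ∘ₗ ρ
      = (TensorProduct.assoc k V C C).toLinearMap ∘ₗ ρ.rTensor C ∘ₗ ρ

/-- A right module structure map over an algebra-like datum `(μ, 1)` on `B`. -/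
structure IsRightMod {B V : Type u} [AddCommGroup B] [Module k B]
    [AddCommGroup V] [Module k V]
    (σ : V ⊗[k] B →ₗ[k] V) (μ : B ⊗[k] B →ₗ[k] B) (oneB : B) : Prop where
  act_one : ∀ v : V, σ (v ⊗ₜ oneB) = v
  act_assoc : σ ∘ₗ σ.rTensor B
      = σ ∘ₗ μ.lTensor V ∘ₗ (TensorProduct.assoc k V B B).toLinearMap

/-- Diagonal left `H`-coaction on a tensor product of two `H`-comodules. -/
noncomputable def diagCoact {H V W : Type u} [Ring H] [Algebra k H]
    [AddCommGroup V] [Module k V] [AddCommGroup W] [Module k W]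
    (ρV : V →ₗ[k] H ⊗[k] V) (ρW : W →ₗ[k] H ⊗[k] W) :
    V ⊗[k] W →ₗ[k] H ⊗[k] (V ⊗[k] W) :=
  (LinearMap.mul' k H).rTensor (V ⊗[k] W)
    ∘ₗ (tensorTensorTensorComm k H V H W).toLinearMap ∘ₗ map ρV ρW

/-- A braided Hopf algebra `A` in the Yetter–Drinfeld category over the Hopf algebra `H`,
with all structure maps given explicitly as linear maps. -/
structure BHA (H : Type u) [Ring H] [HopfAlgebra k H]
    (A : Type u) [AddCommGroup A] [Module k A] where
  mul : A ⊗[k] A →ₗ[k] A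
  one : A
  comul : A →ₗ[k] A ⊗[k] A
  counit : A →ₗ[k] k
  antipode : A →ₗ[k] A
  coact : A →ₗ[k] H ⊗[k] A
  act : H ⊗[k] A →ₗ[k] A
  -- algebra axioms
  mul_assoc' : mul ∘ₗ mul.rTensor A
      = mul ∘ₗ mul.lTensor A ∘ₗ (TensorProduct.assoc k A A A).toLinearMap
  one_mul' : ∀ a : A, mul (one ⊗ₜ a) = a
  mul_one' : ∀ a : A, mul (a ⊗ₜ one) = a
  -- coalgebra axioms
  isCoalg : IsComod k comul comul counit  -- encodes coassociativity and left counit axiom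
  comul_counit : (TensorProduct.rid k A).toLinearMap ∘ₗ counit.lTensor A ∘ₗ comul
      = LinearMap.id
  -- `H`-comodule axioms
  isComodH : IsComod k coact (Coalgebra.comul (R := k) (A := H)) (Coalgebra.counit (R := k) (A := H))
  -- `H`-module axioms
  act_one' : ∀ a : A, act ((1 : H) ⊗ₜ a) = a
  act_mul' : ∀ (g h : H) (a : A), act ((g * h) ⊗ₜ a) = act (g ⊗ₜ act (h ⊗ₜ a))
  -- `A` is an `H`-module algebra
  act_alg : act ∘ₗ mul.lTensor H
      = mul ∘ₗ map act act ∘ₗ (tensorTensorTensorComm k H H A A).toLinearMap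
          ∘ₗ (Coalgebra.comul (R := k) (A := H)).rTensor (A ⊗[k] A)
  act_unit : ∀ h : H, act (h ⊗ₜ one) = Coalgebra.counit (R := k) h • one
  -- `A` is an `H`-comodule algebra
  coact_mul : coact ∘ₗ mul = mul.lTensor H ∘ₗ diagCoact k coact coact
  coact_one : coact one = 1 ⊗ₜ one
  -- Yetter–Drinfeld compatibility: h⁽¹⁾a₍₋₁₎ ⊗ h⁽²⁾·a₍₀₎ = (h⁽¹⁾·a)₍₋₁₎h⁽²⁾ ⊗ (h⁽¹⁾·a)₍₀₎
  yd : map (LinearMap.mul' k H) act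
        ∘ₗ (tensorTensorTensorComm k H H H A).toLinearMap
        ∘ₗ coact.lTensor (H ⊗[k] H)
        ∘ₗ (Coalgebra.comul (R := k) (A := H)).rTensor A
      = (LinearMap.mul' k H).rTensor A
        ∘ₗ (TensorProduct.assoc k H H A).symm.toLinearMap
        ∘ₗ (TensorProduct.comm k A H).toLinearMap.lTensor H
        ∘ₗ (TensorProduct.assoc k H A H).toLinearMap
        ∘ₗ (coact ∘ₗ act).rTensor H
        ∘ₗ (TensorProduct.assoc k H A H).symm.toLinearMap
        ∘ₗ (TensorProduct.comm k H A).toLinearMap.lTensor H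
        ∘ₗ (TensorProduct.assoc k H H A).toLinearMap
        ∘ₗ (Coalgebra.comul (R := k) (A := H)).rTensor A
  -- the braiding of the Yetter–Drinfeld category on `A ⊗ A`
  braid : A ⊗[k] A →ₗ[k] A ⊗[k] A
  braid_def : braid = act.rTensor A
      ∘ₗ (TensorProduct.assoc k H A A).symm.toLinearMap
      ∘ₗ (TensorProduct.comm k A A).toLinearMap.lTensor H
      ∘ₗ (TensorProduct.assoc k H A A).toLinearMap
      ∘ₗ coact.rTensor A
  -- the braided algebra structure on `A ⊗ A`
  mulAA : (A ⊗[k] A) ⊗[k] (A ⊗[k] A) →ₗ[k] A ⊗[k] A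
  mulAA_def : mulAA = map mul mul
      ∘ₗ (TensorProduct.assoc k A A (A ⊗[k] A)).symm.toLinearMap
      ∘ₗ ((TensorProduct.assoc k A A A).toLinearMap
            ∘ₗ braid.rTensor A
            ∘ₗ (TensorProduct.assoc k A A A).symm.toLinearMap).lTensor A
      ∘ₗ (TensorProduct.assoc k A A (A ⊗[k] A)).toLinearMap
  -- braided bialgebra axioms
  comul_mul : comul ∘ₗ mul = mulAA ∘ₗ map comul comul
  counit_mul : ∀ x y : A, counit (mul (x ⊗ₜ y)) = counit x * counit y
  comul_one : comul one = one ⊗ₜ one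
  counit_one : counit one = 1
  -- antipode axioms
  antipode_left : ∀ a : A, mul (antipode.rTensor A (comul a)) = counit a • one
  antipode_right : ∀ a : A, mul (antipode.lTensor A (comul a)) = counit a • one
  -- the comultiplication and counit of `A` are `H`-colinear
  comul_colinear : diagCoact k coact coact ∘ₗ comul = comul.lTensor H ∘ₗ coact
  counit_colinear : ∀ a : A, counit.lTensor H (coact a) = counit a • ((1 : H) ⊗ₜ (1 : k))

namespace BHA

variable {k} {H A : Type u} [Ring H] [HopfAlgebra k H]
  [AddCommGroup A] [Module k A]

/-- Group-like elements of `A`. -/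
def IsGroupLike (S : BHA k H A) (g : A) : Prop :=
  S.comul g = g ⊗ₜ g ∧ S.counit g = 1

/-- `C` is a subcoalgebra of `A`. -/
def IsSubcoalgebra (S : BHA k H A) (C : Submodule k A) : Prop :=
  ∀ c ∈ C, S.comul c ∈ LinearMap.range (map C.subtype C.subtype)

/-- `C` is a simple subcoalgebra of `A`. -/
def IsSimpleSubcoalgebra (S : BHA k H A) (C : Submodule k A) : Prop :=
  S.IsSubcoalgebra C ∧ C ≠ ⊥ ∧
    ∀ D : Submodule k A, S.IsSubcoalgebra D → D ≤ C → D ≠ ⊥ → D = C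

/-- `A` is pointed: all its simple subcoalgebras are one-dimensional. -/
def IsPointed (S : BHA k H A) : Prop :=
  ∀ C : Submodule k A, S.IsSimpleSubcoalgebra C → Module.finrank k C = 1

/-- `K` is a left coideal subalgebra of `A` in the category of left `H`-comodules. -/
def IsLeftCoidealSubalgebra (S : BHA k H A) (K : Submodule k A) : Prop :=
  S.one ∈ K ∧ (∀ x ∈ K, ∀ y ∈ K, S.mul (x ⊗ₜ y) ∈ K) ∧
    (∀ x ∈ K, S.comul x ∈ LinearMap.range (K.subtype.lTensor A)) ∧
    (∀ x ∈ K, S.coact x ∈ LinearMap.range (K.subtype.lTensor H))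

end BHA

end Prelude
section Prelude2

variable (k : Type u) [Field k]

/-- `W` is a subcomodule for the coaction `ρ`. -/
def IsSubcomod {C V : Type u} [AddCommGroup C] [Module k C] [AddCommGroup V] [Module k V]
    (ρ : V →ₗ[k] C ⊗[k] V) (W : Submodule k V) : Prop :=
  ∀ w ∈ W, ρ w ∈ LinearMap.range (W.subtype.lTensor C)

/-- A coalgebra-datum `(Δ, ε)` is cosemisimple if every subcomodule of every comodule
admits a complementary subcomodule. -/
def CosemisimpleCoalg {C : Type u} [AddCommGroup C] [Module k C]
    (Δ : C →ₗ[k] C ⊗[k] C) (ε : C →ₗ[k] k) : Prop :=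
  ∀ (V : Type u) [AddCommGroup V] [Module k V] (ρ : V →ₗ[k] C ⊗[k] V),
    IsComod k ρ Δ ε → ∀ W : Submodule k V, IsSubcomod k ρ W →
      ∃ W' : Submodule k V, IsCompl W W' ∧ IsSubcomod k ρ W'

/-- The half-braided diagonal right action of `K'` on `A ⊗ X`:
`(a ⊗ x) · c = a (x₍₋₁₎ · c⁽¹⁾) ⊗ x₍₀₎ · c⁽²⁾`. -/
noncomputable def halfBraidedAction {H A X K' : Type u} [Ring H] [Algebra k H]
    [AddCommGroup A] [Module k A] [AddCommGroup X] [Module k X]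
    [AddCommGroup K'] [Module k K']
    (mulA : A ⊗[k] A →ₗ[k] A) (act : H ⊗[k] A →ₗ[k] A)
    (ρX : X →ₗ[k] H ⊗[k] X) (σX : X ⊗[k] K' →ₗ[k] X)
    (comulK : K' →ₗ[k] A ⊗[k] K') :
    (A ⊗[k] X) ⊗[k] K' →ₗ[k] A ⊗[k] X :=
  map (mulA ∘ₗ act.lTensor A ∘ₗ (TensorProduct.assoc k A H A).toLinearMap) σX
    ∘ₗ (tensorTensorTensorComm k (A ⊗[k] H) X A K').toLinearMap
    ∘ₗ ((TensorProduct.assoc k A H X).symm.toLinearMap ∘ₗ ρX.lTensor A).rTensor (A ⊗[k] K')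
    ∘ₗ comulK.lTensor (A ⊗[k] X)

/-- The half-braided diagonal left `A`-coaction on `U ⊗ K'`:
`u ⊗ c ↦ u⁽⁻¹⁾ (u⁽⁰⁾₍₋₁₎ · c⁽¹⁾) ⊗ u⁽⁰⁾₍₀₎ ⊗ c⁽²⁾`. -/
noncomputable def halfBraidedCoact {H A U K' : Type u} [Ring H] [Algebra k H]
    [AddCommGroup A] [Module k A] [AddCommGroup U] [Module k U]
    [AddCommGroup K'] [Module k K']
    (mulA : A ⊗[k] A →ₗ[k] A) (act : H ⊗[k] A →ₗ[k] A)
    (ρAU : U →ₗ[k] A ⊗[k] U) (ρHU : U →ₗ[k] H ⊗[k] U)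
    (comulK : K' →ₗ[k] A ⊗[k] K') :
    U ⊗[k] K' →ₗ[k] A ⊗[k] (U ⊗[k] K') :=
  map (mulA ∘ₗ act.lTensor A ∘ₗ (TensorProduct.assoc k A H A).toLinearMap) LinearMap.id
    ∘ₗ (tensorTensorTensorComm k (A ⊗[k] H) U A K').toLinearMap
    ∘ₗ ((TensorProduct.assoc k A H U).symm.toLinearMap ∘ₗ ρHU.lTensor A).rTensor (A ⊗[k] K')
    ∘ₗ map ρAU comulK

namespace BHA

variable {k} {H A : Type u} [Ring H] [HopfAlgebra k H] [AddCommGroup A] [Module k A]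

/-- `comulK` is the restriction of the comultiplication of `A` to the left coideal `K`. -/
def RestrictsComul (S : BHA k H A) (K : Submodule k A)
    (comulK : ↥K →ₗ[k] A ⊗[k] ↥K) : Prop :=
  K.subtype.lTensor A ∘ₗ comulK = S.comul ∘ₗ K.subtype

/-- `coactK` is the restriction of the `H`-coaction of `A` to `K`. -/
def RestrictsCoact (S : BHA k H A) (K : Submodule k A)
    (coactK : ↥K →ₗ[k] H ⊗[k] ↥K) : Prop :=
  K.subtype.lTensor H ∘ₗ coactK = S.coact ∘ₗ K.subtype

/-- `mulK` is the restriction of the multiplication of `A` to the subalgebra `K`. -/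
def RestrictsMul (S : BHA k H A) (K : Submodule k A)
    (mulK : ↥K ⊗[k] ↥K →ₗ[k] ↥K) : Prop :=
  K.subtype ∘ₗ mulK = S.mul ∘ₗ map K.subtype K.subtype

variable (S : BHA k H A) (K : Submodule k A)

/-- A (left-right) Hopf module in `^A(^H 𝓜)_K`: a left `H`-comodule `V` with a
left `A`-coaction and a right `K`-action, all `H`-colinear, such that the `A`-coaction
is right `K`-linear for the half-braided diagonal `K`-action on `A ⊗ V`. -/
structure IsHopfModule (mulK : ↥K ⊗[k] ↥K →ₗ[k] ↥K) (oneK : ↥K)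
    (comulK : ↥K →ₗ[k] A ⊗[k] ↥K) (coactK : ↥K →ₗ[k] H ⊗[k] ↥K)
    {V : Type u} [AddCommGroup V] [Module k V]
    (ρH : V →ₗ[k] H ⊗[k] V) (ρA : V →ₗ[k] A ⊗[k] V)
    (σ : V ⊗[k] ↥K →ₗ[k] V) : Prop where
  comodH : IsComod k ρH (Coalgebra.comul (R := k) (A := H)) (Coalgebra.counit (R := k) (A := H))
  comodA : IsComod k ρA S.comul S.counit
  modK : IsRightMod k σ mulK oneK
  colinearA : diagCoact k S.coact ρH ∘ₗ ρA = ρA.lTensor H ∘ₗ ρH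
  colinearK : ρH ∘ₗ σ = σ.lTensor H ∘ₗ diagCoact k ρH coactK
  Klinear : ρA ∘ₗ σ = halfBraidedAction k S.mul S.act ρH σ comulK ∘ₗ ρA.rTensor ↥K

/-- `V` (with right `K`-action `σ` and `H`-coaction `ρH`) is `K`-free in the category of
left `H`-comodules: it is freely generated as a `K`-module by an `H`-subcomodule. -/
def IsKFree {V : Type u} [AddCommGroup V] [Module k V]
    (ρH : V →ₗ[k] H ⊗[k] V) (σ : V ⊗[k] ↥K →ₗ[k] V) : Prop :=
  ∃ X : Submodule k V, IsSubcomod k ρH X ∧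
    Function.Bijective (σ ∘ₗ X.subtype.rTensor ↥K)

end BHA

end Prelude2

section Aux
variable {k H A : Type u} [Field k] [Ring H] [HopfAlgebra k H]
  [AddCommGroup A] [Module k A]

/-- Naturality of `halfBraidedCoact` in the coideal argument. -/
theorem hbC_nat {U K' K'' : Type u} [AddCommGroup U] [Module k U]
    [AddCommGroup K'] [Module k K'] [AddCommGroup K''] [Module k K'']
    (mulA : A ⊗[k] A →ₗ[k] A) (act : H ⊗[k] A →ₗ[k] A)
    (ρAU : U →ₗ[k] A ⊗[k] U) (ρHU : U →ₗ[k] H ⊗[k] U)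
    (f : K' →ₗ[k] K'') (comulK' : K' →ₗ[k] A ⊗[k] K') (comulK'' : K'' →ₗ[k] A ⊗[k] K'')
    (hf : f.lTensor A ∘ₗ comulK' = comulK'' ∘ₗ f) :
    (f.lTensor U).lTensor A ∘ₗ halfBraidedCoact k mulA act ρAU ρHU comulK'
      = halfBraidedCoact k mulA act ρAU ρHU comulK'' ∘ₗ f.lTensor U := by
  apply TensorProduct.ext'
  intro u c
  have hc : comulK'' (f c) = (f.lTensor A) (comulK' c) := (LinearMap.congr_fun hf c).symm
  simp only [halfBraidedCoact, LinearMap.comp_apply, map_tmul, lTensor_tmul,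
    LinearMap.id_coe, id_eq, hc]
  generalize comulK' c = q
  generalize ρAU u = p
  induction p with
  | zero => simp
  | add p₁ p₂ h₁ h₂ =>
    simp only [add_tmul, map_add, LinearEquiv.map_add] at h₁ h₂ ⊢
    rw [h₁, h₂]
  | tmul a u' =>
    induction q with
    | zero => simp
    | add q₁ q₂ h₁ h₂ =>
      simp only [map_add, tmul_add, LinearEquiv.map_add] at h₁ h₂ ⊢
      rw [h₁, h₂]
    | tmul b c₀ =>
      simp only [map_tmul, lTensor_tmul, rTensor_tmul, LinearMap.comp_apply]
      generalize ρHU u' = T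
      induction T with
      | zero => simp
      | add T₁ T₂ h₁ h₂ =>
        simp only [map_add, tmul_add, add_tmul, LinearEquiv.map_add] at h₁ h₂ ⊢
        rw [h₁, h₂]
      | tmul t w => simp

end Aux

section Aux2
variable {k H A : Type u} [Field k] [Ring H] [HopfAlgebra k H]
  [AddCommGroup A] [Module k A]

/-- Naturality of `halfBraidedAction`. -/
theorem hbA_nat {X X' K' K'' : Type u} [AddCommGroup X] [Module k X]
    [AddCommGroup X'] [Module k X']
    [AddCommGroup K'] [Module k K'] [AddCommGroup K''] [Module k K'']
    (mulA : A ⊗[k] A →ₗ[k] A) (act : H ⊗[k] A →ₗ[k] A)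
    (g : X →ₗ[k] X') (f : K' →ₗ[k] K'')
    (ρX : X →ₗ[k] H ⊗[k] X) (ρX' : X' →ₗ[k] H ⊗[k] X')
    (σX : X ⊗[k] K' →ₗ[k] X) (σX' : X' ⊗[k] K'' →ₗ[k] X')
    (comulK' : K' →ₗ[k] A ⊗[k] K') (comulK'' : K'' →ₗ[k] A ⊗[k] K'')
    (hρ : ρX' ∘ₗ g = g.lTensor H ∘ₗ ρX)
    (hσ : σX' ∘ₗ map g f = g ∘ₗ σX)
    (hc : f.lTensor A ∘ₗ comulK' = comulK'' ∘ₗ f) :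
    g.lTensor A ∘ₗ halfBraidedAction k mulA act ρX σX comulK'
      = halfBraidedAction k mulA act ρX' σX' comulK'' ∘ₗ map (g.lTensor A) f := by
  apply TensorProduct.ext'
  intro w c
  have hc' : comulK'' (f c) = (f.lTensor A) (comulK' c) := (LinearMap.congr_fun hc c).symm
  simp only [halfBraidedAction, LinearMap.comp_apply, map_tmul, lTensor_tmul,
    LinearMap.id_coe, id_eq, hc']
  generalize comulK' c = q
  induction w with
  | zero => simp
  | add w₁ w₂ h₁ h₂ =>
    simp only [add_tmul, map_add, LinearEquiv.map_add] at h₁ h₂ ⊢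
    rw [h₁, h₂]
  | tmul b x =>
    have hρ' : ρX' (g x) = (g.lTensor H) (ρX x) := LinearMap.congr_fun hρ x
    simp only [map_tmul, lTensor_tmul, rTensor_tmul, LinearMap.comp_apply, hρ']
    induction q with
    | zero => simp
    | add q₁ q₂ h₁ h₂ =>
      simp only [map_add, tmul_add, LinearEquiv.map_add] at h₁ h₂ ⊢
      rw [h₁, h₂]
    | tmul a' c₂ =>
      generalize ρX x = T
      induction T with
      | zero => simp
      | add T₁ T₂ h₁ h₂ =>
        simp only [map_add, tmul_add, add_tmul, LinearEquiv.map_add] at h₁ h₂ ⊢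
        rw [h₁, h₂]
      | tmul h x₀ =>
        have hσ' : σX' ((g x₀) ⊗ₜ[k] (f c₂)) = g (σX (x₀ ⊗ₜ c₂)) :=
          LinearMap.congr_fun hσ (x₀ ⊗ₜ c₂)
        simp [hσ']

end Aux2

section Core
variable {k H A : Type u} [Field k] [Ring H] [HopfAlgebra k H]
  [AddCommGroup A] [Module k A]

/-- Auxiliary map for the core Hopf-module computation:
`(g ⊗ (g' ⊗ w)) ⊗ (h ⊗ z) ↦ (a(g·x₁))((g'h)·y₁) ⊗ w ⊗ z y₂`. -/
noncomputable def lam2 {U : Type u} [AddCommGroup U] [Module k U]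
    (mulA : A ⊗[k] A →ₗ[k] A) (act : H ⊗[k] A →ₗ[k] A) (a x₁ y₁ y₂ : A) :
    (H ⊗[k] (H ⊗[k] U)) ⊗[k] (H ⊗[k] A) →ₗ[k] A ⊗[k] (U ⊗[k] A) :=
  map (mulA
        ∘ₗ map (mulA ∘ₗ TensorProduct.mk k A A a ∘ₗ act ∘ₗ (TensorProduct.mk k H A).flip x₁)
               (act ∘ₗ (TensorProduct.mk k H A).flip y₁ ∘ₗ LinearMap.mul' k H)
        ∘ₗ (TensorProduct.assoc k H H H).toLinearMap)
      ((mulA ∘ₗ (TensorProduct.mk k A A).flip y₂).lTensor U)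
    ∘ₗ (tensorTensorTensorComm k (H ⊗[k] H) U H A).toLinearMap
    ∘ₗ ((TensorProduct.assoc k H H U).symm.toLinearMap).rTensor (H ⊗[k] A)

theorem hbC_core {U : Type u} [AddCommGroup U] [Module k U]
    (S : BHA k H A) (ρAU : U →ₗ[k] A ⊗[k] U) (ρHU : U →ₗ[k] H ⊗[k] U)
    (hρHU : IsComod k ρHU (Coalgebra.comul (R := k) (A := H)) (Coalgebra.counit (R := k) (A := H))) :
    halfBraidedCoact k S.mul S.act ρAU ρHU S.comul
        ∘ₗ (S.mul.lTensor U ∘ₗ (TensorProduct.assoc k U A A).toLinearMap)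
      = halfBraidedAction k S.mul S.act (diagCoact k ρHU S.coact)
          (S.mul.lTensor U ∘ₗ (TensorProduct.assoc k U A A).toLinearMap) S.comul
        ∘ₗ (halfBraidedCoact k S.mul S.act ρAU ρHU S.comul).rTensor A := by
  apply TensorProduct.ext_threefold
  intro u x y
  have hcm : S.comul (S.mul (x ⊗ₜ y)) = S.mulAA (S.comul x ⊗ₜ S.comul y) := by
    have := LinearMap.congr_fun S.comul_mul (x ⊗ₜ y)
    simpa using this
  simp only [halfBraidedCoact, halfBraidedAction, LinearMap.comp_apply, map_tmul,
    lTensor_tmul, rTensor_tmul, LinearMap.id_coe, id_eq, LinearEquiv.coe_coe,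
    TensorProduct.assoc_tmul, hcm]
  generalize S.comul x = Qx
  generalize S.comul y = Qy
  generalize ρAU u = P
  induction P with
  | zero => simp
  | add P₁ P₂ h₁ h₂ =>
    simp only [map_add, tmul_add, add_tmul, LinearEquiv.map_add] at h₁ h₂ ⊢
    rw [h₁, h₂]
  | tmul a u' =>
    simp only [lTensor_tmul]
    induction Qx with
    | zero => simp
    | add Q₁ Q₂ h₁ h₂ =>
      simp only [map_add, tmul_add, add_tmul, LinearEquiv.map_add] at h₁ h₂ ⊢
      rw [h₁, h₂]
    | tmul x₁ x₂ =>
      induction Qy with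
      | zero => simp
      | add Q₁ Q₂ h₁ h₂ =>
        simp only [map_add, tmul_add, add_tmul, LinearEquiv.map_add] at h₁ h₂ ⊢
        rw [h₁, h₂]
      | tmul y₁ y₂ =>
        rw [S.mulAA_def, S.braid_def]
        simp only [LinearMap.comp_apply, LinearEquiv.coe_coe, TensorProduct.assoc_tmul,
          TensorProduct.assoc_symm_tmul, lTensor_tmul, rTensor_tmul, map_tmul,
          LinearMap.id_coe, id_eq]
        have h1 : ∀ (T : H ⊗[k] U) (C : H ⊗[k] A),
            (TensorProduct.map (S.mul ∘ₗ LinearMap.lTensor A S.act ∘ₗ (TensorProduct.assoc k A H A).toLinearMap) LinearMap.id)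
              ((TensorProduct.tensorTensorTensorComm k (A ⊗[k] H) U A A)
                ((TensorProduct.assoc k A H U).symm (a ⊗ₜ[k] T) ⊗ₜ[k]
                  (TensorProduct.map S.mul S.mul)
                    ((TensorProduct.assoc k A A (A ⊗[k] A)).symm
                      (x₁ ⊗ₜ[k]
                        (TensorProduct.assoc k A A A)
                          ((LinearMap.rTensor A S.act)
                              ((TensorProduct.assoc k H A A).symm
                                ((LinearMap.lTensor H (TensorProduct.comm k A A).toLinearMap)
                                  ((TensorProduct.assoc k H A A) (C ⊗ₜ[k] y₁)))) ⊗ₜ[k]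
                            y₂)))))
            = lam2 S.mul S.act a x₁ y₁ y₂
                ((TensorProduct.assoc k H H U)
                  ((LinearMap.rTensor U (Coalgebra.comul (R := k) (A := H))) T) ⊗ₜ[k] C) := by
          intro T C
          induction T with
          | zero => simp
          | add T₁ T₂ h₁ h₂ =>
            simp only [map_add, tmul_add, add_tmul, LinearEquiv.map_add] at h₁ h₂ ⊢
            rw [h₁, h₂]
          | tmul t w =>
            induction C with
            | zero => simp
            | add c₁ c₂ g₁ g₂ =>
              simp only [map_add, tmul_add, add_tmul, LinearEquiv.map_add] at g₁ g₂ ⊢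
              rw [g₁, g₂]
            | tmul h z =>
              simp only [LinearMap.comp_apply, LinearEquiv.coe_coe, TensorProduct.assoc_tmul,
                TensorProduct.assoc_symm_tmul, lTensor_tmul, rTensor_tmul, map_tmul,
                LinearMap.id_coe, id_eq, tensorTensorTensorComm_tmul, comm_tmul]
              have ha := LinearMap.congr_fun S.act_alg (t ⊗ₜ[k] (x₁ ⊗ₜ[k] S.act (h ⊗ₜ[k] y₁)))
              simp only [LinearMap.comp_apply, lTensor_tmul, rTensor_tmul, LinearEquiv.coe_coe,
                map_tmul] at ha
              rw [ha]
              generalize (Coalgebra.comul (R := k) (A := H)) t = D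
              induction D with
              | zero => simp
              | add d₁ d₂ g₁ g₂ =>
                simp only [map_add, tmul_add, add_tmul, LinearEquiv.map_add] at g₁ g₂ ⊢
                rw [g₁, g₂]
              | tmul g g' =>
                have hm := LinearMap.congr_fun S.mul_assoc'
                  ((a ⊗ₜ[k] S.act (g ⊗ₜ[k] x₁)) ⊗ₜ[k] S.act ((g' * h) ⊗ₜ[k] y₁))
                simp only [LinearMap.comp_apply, rTensor_tmul, lTensor_tmul, LinearEquiv.coe_coe,
                  TensorProduct.assoc_tmul, map_tmul] at hm
                simp [lam2, LinearMap.mul'_apply, ← S.act_mul', ← hm]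
        have h2 : ∀ (T : H ⊗[k] U),
            (TensorProduct.map (S.mul ∘ₗ LinearMap.lTensor A S.act ∘ₗ (TensorProduct.assoc k A H A).toLinearMap)
                (LinearMap.lTensor U S.mul ∘ₗ (TensorProduct.assoc k U A A).toLinearMap))
              ((TensorProduct.tensorTensorTensorComm k (A ⊗[k] H) (U ⊗[k] A) A A)
                ((TensorProduct.assoc k A H (U ⊗[k] A)).symm
                    ((LinearMap.lTensor A (diagCoact k ρHU S.coact))
                      ((TensorProduct.map (S.mul ∘ₗ LinearMap.lTensor A S.act ∘ₗ (TensorProduct.assoc k A H A).toLinearMap) LinearMap.id)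
                        ((TensorProduct.tensorTensorTensorComm k (A ⊗[k] H) U A A)
                          ((TensorProduct.assoc k A H U).symm (a ⊗ₜ[k] T) ⊗ₜ[k] (x₁ ⊗ₜ[k] x₂))))) ⊗ₜ[k]
                  (y₁ ⊗ₜ[k] y₂)))
            = lam2 S.mul S.act a x₁ y₁ y₂ ((LinearMap.lTensor H ρHU) T ⊗ₜ[k] S.coact x₂) := by
          intro T
          induction T with
          | zero => simp
          | add T₁ T₂ h₁ h₂ =>
            simp only [map_add, tmul_add, add_tmul, LinearEquiv.map_add] at h₁ h₂ ⊢
            rw [h₁, h₂]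
          | tmul t w =>
            simp only [LinearMap.comp_apply, LinearEquiv.coe_coe, TensorProduct.assoc_tmul,
              TensorProduct.assoc_symm_tmul, lTensor_tmul, rTensor_tmul, map_tmul,
              LinearMap.id_coe, id_eq, tensorTensorTensorComm_tmul, diagCoact]
            generalize ρHU w = T₂
            generalize S.coact x₂ = C
            induction T₂ with
            | zero => simp
            | add s₁ s₂ g₁ g₂ =>
              simp only [map_add, tmul_add, add_tmul, LinearEquiv.map_add] at g₁ g₂ ⊢
              rw [g₁, g₂]
            | tmul g' w₀ =>
              induction C with
              | zero => simp
              | add c₁ c₂ g₁ g₂ =>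
                simp only [map_add, tmul_add, add_tmul, LinearEquiv.map_add] at g₁ g₂ ⊢
                rw [g₁, g₂]
              | tmul h z =>
                simp [lam2, LinearMap.mul'_apply, mul_comm]
        rw [h1 (ρHU u') (S.coact x₂), h2 (ρHU u')]
        have hco := LinearMap.congr_fun hρHU.coassoc u'
        simp only [LinearMap.comp_apply, LinearEquiv.coe_coe] at hco
        rw [hco]
        simp

end Core


/-- For a left `A`-comodule `U` in left `H`-comodules and a left coideal
subalgebra `K` of `A` in `H`-comodules, the tensor product `U ⊗ K` — with diagonal
`H`-coaction, half-braided diagonal `A`-coaction and right `K`-action by multiplication on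
the second factor — is a Hopf module: the `A`-coaction on `U ⊗ K` is right `K`-linear for
the half-braided diagonal `K`-action on `A ⊗ (U ⊗ K)`. -/
theorem tensor_with_coideal_isHopfModule
    {k H A : Type u} [Field k] [Ring H] [HopfAlgebra k H]
    [AddCommGroup A] [Module k A] (S : BHA k H A)
    (K : Submodule k A) (hK : S.IsLeftCoidealSubalgebra K)
    (comulK : ↥K →ₗ[k] A ⊗[k] ↥K) (hcomulK : S.RestrictsComul K comulK)
    (coactK : ↥K →ₗ[k] H ⊗[k] ↥K) (hcoactK : S.RestrictsCoact K coactK)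
    (mulK : ↥K ⊗[k] ↥K →ₗ[k] ↥K) (hmulK : S.RestrictsMul K mulK)
    {U : Type u} [AddCommGroup U] [Module k U]
    (ρHU : U →ₗ[k] H ⊗[k] U) (ρAU : U →ₗ[k] A ⊗[k] U)
    (hρHU : IsComod k ρHU (Coalgebra.comul (R := k) (A := H)) (Coalgebra.counit (R := k) (A := H)))
    (hρAU : IsComod k ρAU S.comul S.counit)
    (hcolin : diagCoact k S.coact ρHU ∘ₗ ρAU = ρAU.lTensor H ∘ₗ ρHU) :
    halfBraidedCoact k S.mul S.act ρAU ρHU comulK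
        ∘ₗ (mulK.lTensor U ∘ₗ (TensorProduct.assoc k U ↥K ↥K).toLinearMap)
      = halfBraidedAction k S.mul S.act (diagCoact k ρHU coactK)
          (mulK.lTensor U ∘ₗ (TensorProduct.assoc k U ↥K ↥K).toLinearMap) comulK
        ∘ₗ (halfBraidedCoact k S.mul S.act ρAU ρHU comulK).rTensor ↥K := by
  set ι := K.subtype with hι
  set jU : U ⊗[k] ↥K →ₗ[k] U ⊗[k] A := ι.lTensor U with hjU
  -- Side conditions
  have hρ : diagCoact k ρHU S.coact ∘ₗ jU = jU.lTensor H ∘ₗ diagCoact k ρHU coactK := by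
    apply TensorProduct.ext'
    intro u c
    have hc : S.coact (ι c) = (ι.lTensor H) (coactK c) :=
      (LinearMap.congr_fun hcoactK c).symm
    simp only [diagCoact, LinearMap.comp_apply, map_tmul, lTensor_tmul, hjU, hc]
    generalize ρHU u = T
    generalize coactK c = C
    induction T with
    | zero => simp
    | add T₁ T₂ h₁ h₂ =>
      simp only [map_add, tmul_add, add_tmul, LinearEquiv.map_add] at h₁ h₂ ⊢
      rw [h₁, h₂]
    | tmul t w =>
      induction C with
      | zero => simp
      | add c₁ c₂ g₁ g₂ =>
        simp only [map_add, tmul_add, add_tmul, LinearEquiv.map_add] at g₁ g₂ ⊢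
        rw [g₁, g₂]
      | tmul h c₀ => simp
  have hσ : (S.mul.lTensor U ∘ₗ (TensorProduct.assoc k U A A).toLinearMap) ∘ₗ TensorProduct.map jU ι
      = jU ∘ₗ (mulK.lTensor U ∘ₗ (TensorProduct.assoc k U ↥K ↥K).toLinearMap) := by
    apply TensorProduct.ext'
    intro m c'
    induction m with
    | zero => simp
    | add m₁ m₂ h₁ h₂ =>
      simp only [map_add, tmul_add, add_tmul, LinearEquiv.map_add, LinearMap.map_add] at h₁ h₂ ⊢
      rw [h₁, h₂]
    | tmul u c =>
      have hm : ι (mulK (c ⊗ₜ c')) = S.mul (ι c ⊗ₜ ι c') := by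
        have := LinearMap.congr_fun hmulK (c ⊗ₜ c')
        simpa [hι] using this
      simp [hjU, hm]
  -- Naturality instances
  have hA := hbC_nat S.mul S.act ρAU ρHU ι comulK S.comul hcomulK
  have hB := hbA_nat S.mul S.act jU ι (diagCoact k ρHU coactK) (diagCoact k ρHU S.coact)
      (mulK.lTensor U ∘ₗ (TensorProduct.assoc k U ↥K ↥K).toLinearMap)
      (S.mul.lTensor U ∘ₗ (TensorProduct.assoc k U A A).toLinearMap)
      comulK S.comul hρ hσ hcomulK
  have hC := hbC_core S ρAU ρHU hρHU
  -- the commuting square for rTensor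
  have hsq : TensorProduct.map (jU.lTensor A) ι
        ∘ₗ (halfBraidedCoact k S.mul S.act ρAU ρHU comulK).rTensor ↥K
      = (halfBraidedCoact k S.mul S.act ρAU ρHU S.comul).rTensor A
        ∘ₗ TensorProduct.map jU ι := by
    apply TensorProduct.ext'
    intro m c
    have := LinearMap.congr_fun hA m
    simp only [LinearMap.comp_apply] at this
    simp only [LinearMap.comp_apply, rTensor_tmul, map_tmul, hjU, this]
  -- injectivity
  have hinj : Function.Injective ⇑(jU.lTensor A) :=
    Module.Flat.lTensor_preserves_injective_linearMap jU
      (Module.Flat.lTensor_preserves_injective_linearMap ι K.injective_subtype)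
  apply LinearMap.ext
  intro z
  apply hinj
  have e1 := LinearMap.congr_fun hA
    ((mulK.lTensor U ∘ₗ (TensorProduct.assoc k U ↥K ↥K).toLinearMap) z)
  have e2 := LinearMap.congr_fun hσ z
  have e3 := LinearMap.congr_fun hC (TensorProduct.map jU ι z)
  have e4 := LinearMap.congr_fun hsq z
  have e5 := LinearMap.congr_fun hB
    ((halfBraidedCoact k S.mul S.act ρAU ρHU comulK).rTensor ↥K z)
  simp only [LinearMap.comp_apply] at e1 e2 e3 e4 e5 ⊢
  rw [e1, ← e2, e3, ← e4, ← e5]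
end

section
/- Let H be a Hopf algebra, A a braided Hopf algebra in Yetter–Drinfeld modules over H, K a left coideal subalgebra of A in left H-comodules, and Ā = A/K⁺A. Then the canonical map can : A ⊗_K A → A ⊗ Ā, x ⊗ y ↦ x y⁽¹⁾ ⊗ (class of y⁽²⁾), is a bijective map that is right Ā-colinear and left H-colinear. -/
open TensorProduct LinearMap

universe u
set_option maxHeartbeats 1000000

section Quot

variable {k H A : Type u} [Field k] [Ring H] [HopfAlgebra k H]
  [AddCommGroup A] [Module k A]

/-- The subspace `K⁺A ⊆ A`, where `K⁺ = K ∩ ker ε`. -/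
noncomputable def BHA.KplusA (S : BHA k H A) (K : Submodule k A) : Submodule k A :=
  LinearMap.range (S.mul ∘ₗ (K ⊓ LinearMap.ker S.counit).subtype.rTensor A)

/-- The right `Ā`-comodule structure map `A → A ⊗ Ā`, `a ↦ a⁽¹⁾ ⊗ (class of a⁽²⁾)`,
where `Ā = A/K⁺A`. -/
noncomputable def BHA.deltaBar (S : BHA k H A) (K : Submodule k A) :
    A →ₗ[k] A ⊗[k] (A ⧸ S.KplusA K) :=
  (S.KplusA K).mkQ.lTensor A ∘ₗ S.comul

end Quot

/-- The subspace of `A ⊗ A` whose quotient is `A ⊗_K A`. -/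
noncomputable def BHA.relK {k H A : Type u} [Field k] [Ring H] [HopfAlgebra k H]
    [AddCommGroup A] [Module k A] (S : BHA k H A) (K : Submodule k A) :
    Submodule k (A ⊗[k] A) :=
  Submodule.span k {z | ∃ x y c : A, c ∈ K ∧
    z = S.mul (x ⊗ₜ c) ⊗ₜ y - x ⊗ₜ S.mul (c ⊗ₜ y)}

section CanAux

namespace CanAux

variable {k H A : Type u} [Field k] [Ring H] [HopfAlgebra k H]
  [AddCommGroup A] [Module k A]

/-- Multiply-into-first-factor map `x ⊗ (u ⊗ v) ↦ xu ⊗ v`. -/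
noncomputable def chi (S : BHA k H A) : A ⊗[k] (A ⊗[k] A) →ₗ[k] A ⊗[k] A :=
  S.mul.rTensor A ∘ₗ (TensorProduct.assoc k A A A).symm.toLinearMap

/-- Left multiplication by `a`. -/
noncomputable def La (S : BHA k H A) (a : A) : A →ₗ[k] A :=
  S.mul ∘ₗ TensorProduct.mk k A A a

/-- Right multiplication by `v`. -/
noncomputable def Rm (S : BHA k H A) (v : A) : A →ₗ[k] A :=
  S.mul ∘ₗ (TensorProduct.mk k A A).flip v

noncomputable def mkH (u : A) : H →ₗ[k] H ⊗[k] A := (TensorProduct.mk k H A).flip u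

/-- `x ⊗ y ↦ x y⁽¹⁾ ⊗ y⁽²⁾`. -/
noncomputable def beta (S : BHA k H A) : A ⊗[k] A →ₗ[k] A ⊗[k] A :=
  chi S ∘ₗ S.comul.lTensor A

/-- `y ↦ S(y⁽¹⁾) ⊗ y⁽²⁾`. -/
noncomputable def Gam (S : BHA k H A) : A →ₗ[k] A ⊗[k] A :=
  S.antipode.rTensor A ∘ₗ S.comul

/-- `x ⊗ y ↦ x S(y⁽¹⁾) ⊗ y⁽²⁾`. -/
noncomputable def gamma (S : BHA k H A) : A ⊗[k] A →ₗ[k] A ⊗[k] A :=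
  chi S ∘ₗ (Gam S).lTensor A

/-- `a ↦ ε(a) • 1`. -/
noncomputable def etaEps (S : BHA k H A) : A →ₗ[k] A := S.counit.smulRight S.one

/-- `c ⊗ u ↦ Δ(c)·(u ⊗ 1)` (braided product). -/
noncomputable def Theta (S : BHA k H A) : A ⊗[k] A →ₗ[k] A ⊗[k] A :=
  S.mulAA ∘ₗ TensorProduct.map S.comul ((TensorProduct.mk k A A).flip S.one)

/-- `c ⊗ u ↦ Σ S(c⁽¹⁾ (c⁽²⁾₍₋₁₎·u)) c⁽²⁾₍₀₎`. -/
noncomputable def Tm (S : BHA k H A) : A ⊗[k] A →ₗ[k] A :=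
  S.mul ∘ₗ S.antipode.rTensor A ∘ₗ Theta S

theorem mul_assoc3 (S : BHA k H A) (a b c : A) :
    S.mul (S.mul (a ⊗ₜ b) ⊗ₜ c) = S.mul (a ⊗ₜ S.mul (b ⊗ₜ c)) := by
  have h := LinearMap.congr_fun S.mul_assoc' ((a ⊗ₜ[k] b) ⊗ₜ[k] c)
  simpa using h

theorem chi_tmul (S : BHA k H A) (x : A) (t : A ⊗[k] A) :
    chi S (x ⊗ₜ t) = (La S x).rTensor A t := by
  induction t using TensorProduct.induction_on with
  | zero => simp
  | tmul u v => simp [chi, La]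
  | add a b ha hb => simp [tmul_add, ha, hb]

theorem beta_tmul (S : BHA k H A) (x y : A) :
    beta S (x ⊗ₜ y) = (La S x).rTensor A (S.comul y) := by
  simp [beta, chi_tmul]

theorem gamma_tmul (S : BHA k H A) (x y : A) :
    gamma S (x ⊗ₜ y) = (La S x).rTensor A (Gam S y) := by
  simp [gamma, chi_tmul]

theorem La_mul (S : BHA k H A) (x c : A) :
    La S (S.mul (x ⊗ₜ c)) = La S x ∘ₗ La S c := by
  refine LinearMap.ext fun w => ?_
  simp [La, mul_assoc3]

theorem Rm_one (S : BHA k H A) : Rm S S.one = LinearMap.id := by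
  refine LinearMap.ext fun w => ?_
  simp [Rm, S.mul_one']

/-- Generic re-association lemma. -/
theorem mkassoc {P Q R V W : Type u} [AddCommGroup P] [Module k P]
    [AddCommGroup Q] [Module k Q] [AddCommGroup R] [Module k R]
    [AddCommGroup V] [Module k V] [AddCommGroup W] [Module k W]
    (f₁ : P ⊗[k] Q →ₗ[k] V) (f₂ : R →ₗ[k] W) (c : P) (t : Q ⊗[k] R) :
    TensorProduct.map f₁ f₂ ((TensorProduct.assoc k P Q R).symm (c ⊗ₜ t))
      = TensorProduct.map (f₁ ∘ₗ TensorProduct.mk k P Q c) f₂ t := by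
  induction t using TensorProduct.induction_on with
  | zero => simp
  | tmul u v => simp
  | add a b ha hb => simp [tmul_add, ha, hb]

theorem antipode_left_map (S : BHA k H A) :
    S.mul ∘ₗ S.antipode.rTensor A ∘ₗ S.comul = etaEps S := by
  refine LinearMap.ext fun a => ?_
  simp [etaEps, S.antipode_left a]

theorem antipode_right_map (S : BHA k H A) :
    S.mul ∘ₗ S.antipode.lTensor A ∘ₗ S.comul = etaEps S := by
  refine LinearMap.ext fun a => ?_
  simp [etaEps, S.antipode_right a]

theorem counit_pt (S : BHA k H A) (y : A) :
    (TensorProduct.lid k A) (S.counit.rTensor A (S.comul y)) = y := by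
  have h := LinearMap.congr_fun S.isCoalg.counit y
  simpa using h

theorem counit_pt' (S : BHA k H A) (y : A) :
    (TensorProduct.rid k A) (S.counit.lTensor A (S.comul y)) = y := by
  have h := LinearMap.congr_fun S.comul_counit y
  simpa using h

theorem coassoc_pt (S : BHA k H A) (y : A) :
    S.comul.lTensor A (S.comul y)
      = (TensorProduct.assoc k A A A) (S.comul.rTensor A (S.comul y)) := by
  have h := LinearMap.congr_fun S.isCoalg.coassoc y
  simp only [LinearMap.comp_apply, LinearEquiv.coe_coe] at h
  rw [h]
  simp

theorem braid_tmul (S : BHA k H A) (b u : A) :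
    S.braid (b ⊗ₜ u) = TensorProduct.map (S.act ∘ₗ mkH u) LinearMap.id (S.coact b) := by
  rw [S.braid_def]
  simp only [LinearMap.comp_apply, LinearEquiv.coe_coe, LinearMap.rTensor_tmul]
  generalize S.coact b = t
  induction t using TensorProduct.induction_on with
  | zero => simp
  | tmul h b₀ => simp [mkH]
  | add a b ha hb => simp [add_tmul, ha, hb]

theorem mulAA_tmul (S : BHA k H A) (a b u v : A) :
    S.mulAA ((a ⊗ₜ b) ⊗ₜ (u ⊗ₜ v))
      = TensorProduct.map (La S a ∘ₗ S.act ∘ₗ mkH u) (Rm S v) (S.coact b) := by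
  rw [S.mulAA_def]
  simp only [LinearMap.comp_apply, LinearEquiv.coe_coe, TensorProduct.assoc_tmul,
    LinearMap.lTensor_tmul, TensorProduct.assoc_symm_tmul, LinearMap.rTensor_tmul]
  rw [braid_tmul]
  generalize S.coact b = t
  induction t using TensorProduct.induction_on with
  | zero => simp
  | tmul h r => simp [mkH, La, Rm]
  | add s t hs ht => simp [add_tmul, tmul_add, hs, ht, map_add]

theorem comul_mul_pt (S : BHA k H A) (c y : A) :
    S.comul (S.mul (c ⊗ₜ y)) = S.mulAA (S.comul c ⊗ₜ S.comul y) := by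
  have h := LinearMap.congr_fun S.comul_mul (c ⊗ₜ[k] y)
  simpa using h

theorem coact_mul_pt (S : BHA k H A) (c y : A) :
    S.coact (S.mul (c ⊗ₜ y))
      = S.mul.lTensor H ((LinearMap.mul' k H).rTensor (A ⊗[k] A)
          ((tensorTensorTensorComm k H A H A) (S.coact c ⊗ₜ S.coact y))) := by
  have h := LinearMap.congr_fun S.coact_mul (c ⊗ₜ[k] y)
  simpa [diagCoact] using h


section WithK

variable (S : BHA k H A) (K : Submodule k A)

/-- The restricted comultiplication `K → A ⊗ K`. -/
noncomputable def comulK (hK : S.IsLeftCoidealSubalgebra K) : ↥K →ₗ[k] A ⊗[k] ↥K :=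
  (LinearEquiv.ofInjective (K.subtype.lTensor A)
      (Module.Flat.lTensor_preserves_injective_linearMap K.subtype
        K.injective_subtype)).symm.toLinearMap
    ∘ₗ LinearMap.codRestrict _ (S.comul ∘ₗ K.subtype) (fun κ => hK.2.2.1 κ κ.2)

theorem hcomulK (hK : S.IsLeftCoidealSubalgebra K) (κ : ↥K) :
    K.subtype.lTensor A (comulK S K hK κ) = S.comul (κ : A) := by
  set e := LinearEquiv.ofInjective (K.subtype.lTensor A)
      (Module.Flat.lTensor_preserves_injective_linearMap K.subtype K.injective_subtype)
  have h1 : ∀ z : LinearMap.range (K.subtype.lTensor A),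
      K.subtype.lTensor A (e.symm z) = (z : A ⊗[k] A) := by
    intro z
    have := e.apply_symm_apply z
    have h2 : ((e (e.symm z) : LinearMap.range (K.subtype.lTensor A)) : A ⊗[k] A)
        = K.subtype.lTensor A (e.symm z) := rfl
    rw [this] at h2
    exact h2.symm
  exact h1 _

/-- The restricted coaction `K → H ⊗ K`. -/
noncomputable def coactK (hK : S.IsLeftCoidealSubalgebra K) : ↥K →ₗ[k] H ⊗[k] ↥K :=
  (LinearEquiv.ofInjective (K.subtype.lTensor H)
      (Module.Flat.lTensor_preserves_injective_linearMap K.subtype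
        K.injective_subtype)).symm.toLinearMap
    ∘ₗ LinearMap.codRestrict _ (S.coact ∘ₗ K.subtype) (fun κ => hK.2.2.2 κ κ.2)

theorem hcoactK (hK : S.IsLeftCoidealSubalgebra K) (κ : ↥K) :
    K.subtype.lTensor H (coactK S K hK κ) = S.coact (κ : A) := by
  set e := LinearEquiv.ofInjective (K.subtype.lTensor H)
      (Module.Flat.lTensor_preserves_injective_linearMap K.subtype K.injective_subtype)
  have h1 : ∀ z : LinearMap.range (K.subtype.lTensor H),
      K.subtype.lTensor H (e.symm z) = (z : H ⊗[k] A) := by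
    intro z
    have := e.apply_symm_apply z
    have h2 : ((e (e.symm z) : LinearMap.range (K.subtype.lTensor H)) : H ⊗[k] A)
        = K.subtype.lTensor H (e.symm z) := rfl
    rw [this] at h2
    exact h2.symm
  exact h1 _

/-- `p(κv) = ε(κ) p(v)` in `Ā = A/K⁺A`. -/
theorem P1 (hK : S.IsLeftCoidealSubalgebra K) (κ : ↥K) (v : A) :
    (S.KplusA K).mkQ (S.mul ((κ : A) ⊗ₜ v)) = S.counit (κ : A) • (S.KplusA K).mkQ v := by
  rw [← map_smul, Submodule.mkQ_apply, Submodule.mkQ_apply, Submodule.Quotient.eq]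
  have hmem : (κ : A) - S.counit (κ : A) • S.one ∈ K ⊓ LinearMap.ker S.counit := by
    constructor
    · exact sub_mem κ.2 (Submodule.smul_mem _ _ hK.1)
    · simp [LinearMap.mem_ker, S.counit_one]
  refine ⟨(⟨_, hmem⟩ : ↥(K ⊓ LinearMap.ker S.counit)) ⊗ₜ v, ?_⟩
  simp only [LinearMap.comp_apply, LinearMap.rTensor_tmul, Submodule.coe_subtype]
  rw [TensorProduct.sub_tmul, map_sub, ← TensorProduct.smul_tmul', map_smul, S.one_mul' v]

/-- moving an element of `K` across the tensor sign in `A ⊗_K A`. -/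
theorem Qmove (u : A) (κ : ↥K) (v : A) :
    (S.relK K).mkQ (S.mul (u ⊗ₜ (κ : A)) ⊗ₜ v)
      = (S.relK K).mkQ (u ⊗ₜ S.mul ((κ : A) ⊗ₜ v)) := by
  rw [Submodule.mkQ_apply, Submodule.mkQ_apply, Submodule.Quotient.eq]
  exact Submodule.subset_span ⟨u, v, (κ : A), κ.2, rfl⟩

/-- `a ⊗ h ↦ a (h·u)`. -/
noncomputable def innerAH (u : A) : A ⊗[k] H →ₗ[k] A :=
  S.mul ∘ₗ (S.act ∘ₗ mkH u).lTensor A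

/-- `a ⊗ κ ↦ Σ a (κ₍₋₁₎·u) ⊗ κ₍₀₎ v`. -/
noncomputable def Lam1 (hK : S.IsLeftCoidealSubalgebra K) (u v : A) :
    A ⊗[k] ↥K →ₗ[k] A ⊗[k] A :=
  TensorProduct.map (innerAH S u) (Rm S v ∘ₗ K.subtype)
    ∘ₗ (TensorProduct.assoc k A H ↥K).symm.toLinearMap
    ∘ₗ (coactK S K hK).lTensor A

theorem innerAH_mk (u a : A) :
    innerAH S u ∘ₗ TensorProduct.mk k A H a = La S a ∘ₗ S.act ∘ₗ mkH u := by
  refine LinearMap.ext fun h => ?_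
  simp [innerAH, La, mkH]

theorem Lam1_tmul (hK : S.IsLeftCoidealSubalgebra K) (u v a : A) (κ : ↥K) :
    Lam1 S K hK u v (a ⊗ₜ κ)
      = TensorProduct.map (innerAH S u ∘ₗ TensorProduct.mk k A H a)
          (Rm S v ∘ₗ K.subtype) (coactK S K hK κ) := by
  simp [Lam1, mkassoc]

theorem MulAAexp (hK : S.IsLeftCoidealSubalgebra K) (t : A ⊗[k] ↥K) (u v : A) :
    S.mulAA (K.subtype.lTensor A t ⊗ₜ (u ⊗ₜ v)) = Lam1 S K hK u v t := by
  induction t using TensorProduct.induction_on with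
  | zero => simp
  | tmul a κ =>
    rw [Lam1_tmul, innerAH_mk]
    simp only [LinearMap.lTensor_tmul, Submodule.coe_subtype]
    rw [mulAA_tmul, ← hcoactK S K hK κ]
    rw [← LinearMap.comp_apply]
    exact LinearMap.congr_fun (TensorProduct.ext' fun h κ₀ => by simp) _
  | add s t hs ht => simp [add_tmul, hs, ht]

/-- Core collapse lemma: in `M ⊗ Ā`, `Δ(c)·(braided) s ≡ (c · s₁) ⊗ s₂`. -/
theorem CORE {M : Type u} [AddCommGroup M] [Module k M]
    (hK : S.IsLeftCoidealSubalgebra K) (g : A →ₗ[k] M) (c : ↥K) (s : A ⊗[k] A) :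
    TensorProduct.map g (S.KplusA K).mkQ (S.mulAA (S.comul (c : A) ⊗ₜ s))
      = TensorProduct.map g (S.KplusA K).mkQ ((La S (c : A)).rTensor A s) := by
  induction s using TensorProduct.induction_on with
  | zero => simp
  | tmul u v =>
    rw [← hcomulK S K hK c, MulAAexp S K hK _ u v]
    -- reduce LHS applied to `comulK c`
    have key : (TensorProduct.map g (S.KplusA K).mkQ) ∘ₗ Lam1 S K hK u v
        = ((TensorProduct.mk k M (A ⧸ S.KplusA K)).flip ((S.KplusA K).mkQ v))
            ∘ₗ g ∘ₗ Rm S u ∘ₗ (TensorProduct.rid k A).toLinearMap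
            ∘ₗ (S.counit ∘ₗ K.subtype).lTensor A := by
      refine TensorProduct.ext' fun a κ => ?_
      simp only [LinearMap.comp_apply]
      rw [Lam1_tmul]
      rw [← LinearMap.comp_apply, ← TensorProduct.map_comp]
      -- LHS = map (g ∘ innerAH_a) (p ∘ Rm v ∘ subtype) (coactK κ)
      have hb : TensorProduct.map (g ∘ₗ (innerAH S u ∘ₗ TensorProduct.mk k A H a))
            ((S.KplusA K).mkQ ∘ₗ (Rm S v ∘ₗ K.subtype))
          = (((TensorProduct.mk k M (A ⧸ S.KplusA K)).flip ((S.KplusA K).mkQ v))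
                ∘ₗ g ∘ₗ innerAH S u ∘ₗ TensorProduct.mk k A H a
                ∘ₗ (TensorProduct.rid k H).toLinearMap)
              ∘ₗ (S.counit ∘ₗ K.subtype).lTensor H := by
        refine TensorProduct.ext' fun h κ₀ => ?_
        simp only [LinearMap.comp_apply, TensorProduct.map_tmul, LinearMap.lTensor_tmul]
        rw [show Rm S v (K.subtype κ₀) = S.mul ((κ₀ : A) ⊗ₜ v) by simp [Rm]]
        rw [P1 S K hK κ₀ v]
        simp [TensorProduct.tmul_smul]
      rw [hb]
      simp only [LinearMap.comp_apply, LinearEquiv.coe_coe]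
      -- now use counit_colinear on κ
      have hc : (S.counit ∘ₗ K.subtype).lTensor H (coactK S K hK κ)
          = S.counit (κ : A) • ((1 : H) ⊗ₜ (1 : k)) := by
        rw [show (S.counit ∘ₗ K.subtype).lTensor H
            = S.counit.lTensor H ∘ₗ K.subtype.lTensor H from (LinearMap.lTensor_comp H _ _)]
        rw [LinearMap.comp_apply, hcoactK S K hK κ]
        exact S.counit_colinear (κ : A)
      rw [hc]
      simp only [map_smul, TensorProduct.rid_tmul, one_smul, LinearMap.lTensor_tmul,
        LinearMap.comp_apply, Submodule.coe_subtype]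
      simp [innerAH, mkH, S.act_one', Rm, TensorProduct.smul_tmul']
    rw [← LinearMap.comp_apply, key]
    -- RHS side
    have he : (S.counit ∘ₗ K.subtype).lTensor A (comulK S K hK c)
        = S.counit.lTensor A (S.comul (c : A)) := by
      rw [show (S.counit ∘ₗ K.subtype).lTensor A
          = S.counit.lTensor A ∘ₗ K.subtype.lTensor A from (LinearMap.lTensor_comp A _ _)]
      rw [LinearMap.comp_apply, hcomulK S K hK c]
    simp only [LinearMap.comp_apply, LinearEquiv.coe_coe]
    rw [he, counit_pt']
    simp [Rm, La]
  | add s t hs ht => simp [tmul_add, hs, ht]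

/-- Coaction collapse: `(1⊗p)(coact(c a)) = ε(c) (1⊗p)(coact a)` for `c ∈ K`. -/
theorem CORE2 (hK : S.IsLeftCoidealSubalgebra K) (c : ↥K) (a : A) :
    (S.KplusA K).mkQ.lTensor H (S.coact (S.mul ((c : A) ⊗ₜ a)))
      = S.counit (c : A) • (S.KplusA K).mkQ.lTensor H (S.coact a) := by
  rw [coact_mul_pt]
  rw [← hcoactK S K hK c]
  -- bundled composite applied to `r ⊗ₜ w`
  have key : ∀ (r : H ⊗[k] ↥K) (w : H ⊗[k] A),
      (S.KplusA K).mkQ.lTensor H (S.mul.lTensor H ((LinearMap.mul' k H).rTensor (A ⊗[k] A)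
          ((tensorTensorTensorComm k H A H A) (K.subtype.lTensor H r ⊗ₜ w))))
        = TensorProduct.map (LinearMap.mul' k H) (S.KplusA K).mkQ
            ((TensorProduct.assoc k H H A).symm
              (((TensorProduct.rid k H) ((S.counit ∘ₗ K.subtype).lTensor H r)) ⊗ₜ w)) := by
    intro r w
    induction r using TensorProduct.induction_on with
    | zero => simp
    | tmul h κ₀ =>
      induction w using TensorProduct.induction_on with
      | zero => simp
      | tmul h' a₀ =>
        simp only [LinearMap.lTensor_tmul, Submodule.coe_subtype,
          tensorTensorTensorComm_tmul, LinearMap.rTensor_tmul, LinearMap.mul'_apply,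
          LinearMap.comp_apply, TensorProduct.rid_tmul, TensorProduct.assoc_symm_tmul,
          TensorProduct.map_tmul]
        rw [show (S.KplusA K).mkQ (S.mul ((κ₀ : A) ⊗ₜ a₀)) = S.counit (κ₀ : A) •
          (S.KplusA K).mkQ a₀ from P1 S K hK κ₀ a₀]
        rw [TensorProduct.tmul_smul, smul_mul_assoc, TensorProduct.smul_tmul']
      | add x y hx hy =>
        simp only [TensorProduct.tmul_add, map_add, hx, hy]
    | add x y hx hy =>
      simp only [TensorProduct.add_tmul, TensorProduct.tmul_add, map_add, hx, hy]
  rw [key]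
  have hc : (S.counit ∘ₗ K.subtype).lTensor H (coactK S K hK c)
      = S.counit (c : A) • ((1 : H) ⊗ₜ (1 : k)) := by
    rw [show (S.counit ∘ₗ K.subtype).lTensor H
        = S.counit.lTensor H ∘ₗ K.subtype.lTensor H from (LinearMap.lTensor_comp H _ _)]
    rw [LinearMap.comp_apply, hcoactK S K hK c]
    exact S.counit_colinear (c : A)
  rw [hc]
  have key2 : ∀ w : H ⊗[k] A,
      TensorProduct.map (LinearMap.mul' k H) (S.KplusA K).mkQ
        ((TensorProduct.assoc k H H A).symm ((1 : H) ⊗ₜ w))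
      = (S.KplusA K).mkQ.lTensor H w := by
    intro w
    induction w using TensorProduct.induction_on with
    | zero => simp
    | tmul h' a₀ => simp
    | add x y hx hy => simp only [TensorProduct.tmul_add, map_add, hx, hy]
  simp only [map_smul, TensorProduct.rid_tmul, one_smul]
  rw [← TensorProduct.smul_tmul', map_smul, map_smul, key2]

/-- relK is stable under the diagonal `H`-coaction. -/
theorem CORE3 (hK : S.IsLeftCoidealSubalgebra K) (c : ↥K) (x y : A) :
    (S.relK K).mkQ.lTensor H (diagCoact k S.coact S.coact (S.mul (x ⊗ₜ (c : A)) ⊗ₜ y))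
      = (S.relK K).mkQ.lTensor H (diagCoact k S.coact S.coact (x ⊗ₜ S.mul ((c : A) ⊗ₜ y))) := by
  simp only [diagCoact, LinearMap.comp_apply, LinearEquiv.coe_coe, TensorProduct.map_tmul]
  rw [coact_mul_pt S x (c : A), coact_mul_pt S (c : A) y]
  rw [← hcoactK S K hK c]
  set wx := S.coact x
  set r := coactK S K hK c
  set wy := S.coact y
  -- fully general statement
  have key : ∀ (wx : H ⊗[k] A) (r : H ⊗[k] ↥K) (wy : H ⊗[k] A),
      (S.relK K).mkQ.lTensor H ((LinearMap.mul' k H).rTensor (A ⊗[k] A)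
        ((tensorTensorTensorComm k H A H A)
          ((S.mul.lTensor H ((LinearMap.mul' k H).rTensor (A ⊗[k] A)
            ((tensorTensorTensorComm k H A H A) (wx ⊗ₜ K.subtype.lTensor H r)))) ⊗ₜ wy)))
      = (S.relK K).mkQ.lTensor H ((LinearMap.mul' k H).rTensor (A ⊗[k] A)
        ((tensorTensorTensorComm k H A H A)
          (wx ⊗ₜ (S.mul.lTensor H ((LinearMap.mul' k H).rTensor (A ⊗[k] A)
            ((tensorTensorTensorComm k H A H A) (K.subtype.lTensor H r ⊗ₜ wy))))))) := by
    intro wx r wy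
    induction wx using TensorProduct.induction_on with
    | zero => simp
    | tmul h₁ x₀ =>
      induction r using TensorProduct.induction_on with
      | zero => simp
      | tmul h₂ κ₀ =>
        induction wy using TensorProduct.induction_on with
        | zero => simp
        | tmul h₃ y₀ =>
          simp only [LinearMap.lTensor_tmul, Submodule.coe_subtype,
            tensorTensorTensorComm_tmul, LinearMap.rTensor_tmul, LinearMap.mul'_apply]
          rw [mul_assoc]
          exact congrArg _ (Qmove S K x₀ κ₀ y₀)
        | add a b ha hb =>
          simp only [TensorProduct.tmul_add, TensorProduct.add_tmul, map_add, ha, hb]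
      | add a b ha hb =>
        simp only [TensorProduct.tmul_add, TensorProduct.add_tmul, map_add, ha, hb]
    | add a b ha hb =>
      simp only [TensorProduct.tmul_add, TensorProduct.add_tmul, map_add, ha, hb]
  exact key wx r wy

section BG

variable (S : BHA k H A)

theorem etaEps_rTensor_comul (y : A) :
    (etaEps S).rTensor A (S.comul y) = S.one ⊗ₜ y := by
  have key : ∀ t : A ⊗[k] A, (etaEps S).rTensor A t
      = S.one ⊗ₜ ((TensorProduct.lid k A) (S.counit.rTensor A t)) := by
    intro t
    induction t using TensorProduct.induction_on with
    | zero => simp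
    | tmul α β =>
      simp only [LinearMap.rTensor_tmul, etaEps, LinearMap.smulRight_apply,
        LinearEquiv.coe_coe, TensorProduct.lid_tmul, TensorProduct.tmul_smul,
        TensorProduct.smul_tmul']
    | add a b ha hb => simp [ha, hb, TensorProduct.tmul_add]
  rw [key, counit_pt]

theorem gb_inner (y : A) :
    chi S ((Gam S).lTensor A (S.comul y)) = S.one ⊗ₜ y := by
  have h1 : (Gam S).lTensor A (S.comul y)
      = (S.antipode.rTensor A).lTensor A ((TensorProduct.assoc k A A A)
          (S.comul.rTensor A (S.comul y))) := by
    rw [← coassoc_pt]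
    rw [show (Gam S).lTensor A = (S.antipode.rTensor A).lTensor A ∘ₗ S.comul.lTensor A from
      (LinearMap.lTensor_comp A _ _)]
    rfl
  rw [h1]
  have key : ∀ w : (A ⊗[k] A) ⊗[k] A,
      chi S ((S.antipode.rTensor A).lTensor A ((TensorProduct.assoc k A A A) w))
        = (S.mul ∘ₗ S.antipode.lTensor A).rTensor A w := by
    intro w
    induction w using TensorProduct.induction_on with
    | zero => simp
    | tmul s γ =>
      induction s using TensorProduct.induction_on with
      | zero => simp
      | tmul α β => simp [chi]
      | add a b ha hb => simp [TensorProduct.add_tmul, ha, hb]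
    | add a b ha hb => simp [ha, hb]
  rw [key, ← LinearMap.comp_apply, ← LinearMap.rTensor_comp, LinearMap.comp_assoc,
    antipode_right_map S]
  exact etaEps_rTensor_comul S y

theorem bg_inner (y : A) :
    chi S (S.comul.lTensor A (Gam S y)) = S.one ⊗ₜ y := by
  have h1 : S.comul.lTensor A (Gam S y)
      = (S.antipode.rTensor (A ⊗[k] A)) ((TensorProduct.assoc k A A A)
          (S.comul.rTensor A (S.comul y))) := by
    rw [← coassoc_pt]
    show S.comul.lTensor A (S.antipode.rTensor A (S.comul y)) = _
    rw [← LinearMap.comp_apply, LinearMap.lTensor_comp_rTensor,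
        ← LinearMap.rTensor_comp_lTensor, LinearMap.comp_apply]
  rw [h1]
  have key : ∀ w : (A ⊗[k] A) ⊗[k] A,
      chi S ((S.antipode.rTensor (A ⊗[k] A)) ((TensorProduct.assoc k A A A) w))
        = (S.mul ∘ₗ S.antipode.rTensor A).rTensor A w := by
    intro w
    induction w using TensorProduct.induction_on with
    | zero => simp
    | tmul s γ =>
      induction s using TensorProduct.induction_on with
      | zero => simp
      | tmul α β => simp [chi]
      | add a b ha hb => simp [TensorProduct.add_tmul, ha, hb]
    | add a b ha hb => simp [ha, hb]
  rw [key, ← LinearMap.comp_apply, ← LinearMap.rTensor_comp, LinearMap.comp_assoc,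
    antipode_left_map S]
  exact etaEps_rTensor_comul S y

theorem gamma_La (x : A) :
    gamma S ∘ₗ (La S x).rTensor A = (La S x).rTensor A ∘ₗ gamma S := by
  refine TensorProduct.ext' fun a b => ?_
  simp only [LinearMap.comp_apply, LinearMap.rTensor_tmul]
  rw [gamma_tmul, gamma_tmul, show La S x a = S.mul (x ⊗ₜ a) from rfl, La_mul]
  rw [LinearMap.rTensor_comp]
  rfl

theorem beta_La (x : A) :
    beta S ∘ₗ (La S x).rTensor A = (La S x).rTensor A ∘ₗ beta S := by
  refine TensorProduct.ext' fun a b => ?_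
  simp only [LinearMap.comp_apply, LinearMap.rTensor_tmul]
  rw [beta_tmul, beta_tmul, show La S x a = S.mul (x ⊗ₜ a) from rfl, La_mul]
  rw [LinearMap.rTensor_comp]
  rfl

theorem gamma_beta : gamma S ∘ₗ beta S = LinearMap.id := by
  refine TensorProduct.ext' fun x y => ?_
  simp only [LinearMap.comp_apply, LinearMap.id_apply]
  rw [beta_tmul, ← LinearMap.comp_apply, gamma_La, LinearMap.comp_apply]
  rw [show gamma S (S.comul y) = chi S ((Gam S).lTensor A (S.comul y)) from rfl]
  rw [gb_inner]
  simp [La, S.mul_one']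

theorem beta_gamma : beta S ∘ₗ gamma S = LinearMap.id := by
  refine TensorProduct.ext' fun x y => ?_
  simp only [LinearMap.comp_apply, LinearMap.id_apply]
  rw [gamma_tmul, ← LinearMap.comp_apply, beta_La, LinearMap.comp_apply]
  rw [show beta S (Gam S y) = chi S (S.comul.lTensor A (Gam S y)) from rfl]
  rw [bg_inner]
  simp [La, S.mul_one']

end BG

end WithK

section Conv

variable (S : BHA k H A)

/-- Right convolution action of `Hom(A,A)` on `Hom(A ⊗ A, A)`. -/
noncomputable def rconv (G : A ⊗[k] A →ₗ[k] A) (f : A →ₗ[k] A) : A ⊗[k] A →ₗ[k] A :=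
  S.mul ∘ₗ TensorProduct.map G f ∘ₗ (TensorProduct.assoc k A A A).symm.toLinearMap
    ∘ₗ S.comul.lTensor A

/-- Convolution on `Hom(A,A)`. -/
noncomputable def conv (f g : A →ₗ[k] A) : A →ₗ[k] A :=
  S.mul ∘ₗ TensorProduct.map f g ∘ₗ S.comul

theorem rconv_tmul (G : A ⊗[k] A →ₗ[k] A) (f : A →ₗ[k] A) (c y : A) :
    rconv S G f (c ⊗ₜ y)
      = S.mul (TensorProduct.map (G ∘ₗ TensorProduct.mk k A A c) f (S.comul y)) := by
  simp only [rconv, LinearMap.comp_apply, LinearMap.lTensor_tmul, LinearEquiv.coe_coe]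
  rw [mkassoc]

theorem conv_id_antipode : conv S LinearMap.id S.antipode = etaEps S := by
  refine LinearMap.ext fun a => ?_
  have h := LinearMap.congr_fun (antipode_right_map S) a
  simp only [LinearMap.comp_apply] at h ⊢
  rw [conv, LinearMap.comp_apply, LinearMap.comp_apply]
  exact h

theorem rconv_unit (G : A ⊗[k] A →ₗ[k] A) : rconv S G (etaEps S) = G := by
  refine TensorProduct.ext' fun c y => ?_
  rw [rconv_tmul]
  have key : ∀ t : A ⊗[k] A,
      S.mul (TensorProduct.map (G ∘ₗ TensorProduct.mk k A A c) (etaEps S) t)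
        = (G ∘ₗ TensorProduct.mk k A A c)
            ((TensorProduct.rid k A) ((S.counit.lTensor A) t)) := by
    intro t
    induction t using TensorProduct.induction_on with
    | zero => simp
    | tmul α β =>
      simp only [TensorProduct.map_tmul, etaEps, LinearMap.smulRight_apply,
        LinearMap.lTensor_tmul, LinearMap.comp_apply, TensorProduct.rid_tmul,
        LinearEquiv.coe_coe, TensorProduct.tmul_smul, map_smul]
      rw [S.mul_one']
    | add x y hx hy => simp only [map_add, TensorProduct.tmul_add, hx, hy]
  rw [key, counit_pt']
  rfl

theorem rconv_assoc (G : A ⊗[k] A →ₗ[k] A) (f g : A →ₗ[k] A) :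
    rconv S (rconv S G f) g = rconv S G (conv S f g) := by
  refine TensorProduct.ext' fun c y => ?_
  rw [rconv_tmul, rconv_tmul]
  have hL : ∀ t : A ⊗[k] A,
      S.mul (TensorProduct.map (rconv S G f ∘ₗ TensorProduct.mk k A A c) g t)
        = (S.mul ∘ₗ TensorProduct.map
            (S.mul ∘ₗ TensorProduct.map (G ∘ₗ TensorProduct.mk k A A c) f) g)
          ((S.comul.rTensor A) t) := by
    intro t
    induction t using TensorProduct.induction_on with
    | zero => simp
    | tmul y₂ y₃ =>
      simp only [TensorProduct.map_tmul, LinearMap.comp_apply, LinearMap.rTensor_tmul,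
        TensorProduct.mk_apply]
      rw [rconv_tmul]
    | add x y hx hy => simp only [map_add, hx, hy]
  have hR : ∀ t : A ⊗[k] A,
      S.mul (TensorProduct.map (G ∘ₗ TensorProduct.mk k A A c) (conv S f g) t)
        = (S.mul ∘ₗ TensorProduct.map (G ∘ₗ TensorProduct.mk k A A c)
            (S.mul ∘ₗ TensorProduct.map f g)) ((S.comul.lTensor A) t) := by
    intro t
    induction t using TensorProduct.induction_on with
    | zero => simp
    | tmul y₁ w =>
      simp only [TensorProduct.map_tmul, LinearMap.comp_apply, LinearMap.lTensor_tmul,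
        TensorProduct.mk_apply]
      rw [conv, LinearMap.comp_apply, LinearMap.comp_apply]
    | add x y hx hy => simp only [map_add, hx, hy]
  rw [hL, hR, coassoc_pt]
  generalize (S.comul.rTensor A) (S.comul y) = w
  induction w using TensorProduct.induction_on with
  | zero => simp
  | tmul s y₃ =>
    induction s using TensorProduct.induction_on with
    | zero => simp
    | tmul y₁ y₂ =>
      simp only [LinearMap.comp_apply, TensorProduct.map_tmul, TensorProduct.assoc_tmul,
        LinearEquiv.coe_coe]
      rw [mul_assoc3]
    | add x y hx hy => simp only [TensorProduct.add_tmul, map_add, hx, hy]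
  | add x y hx hy => simp only [map_add, hx, hy]

theorem Theta_tmul (c u : A) :
    Theta S (c ⊗ₜ u) = S.mulAA (S.comul c ⊗ₜ (u ⊗ₜ S.one)) := by
  simp [Theta]

theorem mulAA_one_right (t : A ⊗[k] A) (u v : A) :
    S.mulAA (t ⊗ₜ (u ⊗ₜ v))
      = S.mul.lTensor A ((TensorProduct.assoc k A A A)
          (S.mulAA (t ⊗ₜ (u ⊗ₜ S.one)) ⊗ₜ v)) := by
  induction t using TensorProduct.induction_on with
  | zero => simp
  | tmul a b =>
    rw [mulAA_tmul, mulAA_tmul]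
    generalize S.coact b = r
    induction r using TensorProduct.induction_on with
    | zero => simp
    | tmul h r₀ =>
      simp only [TensorProduct.map_tmul, LinearMap.comp_apply, TensorProduct.assoc_tmul,
        LinearEquiv.coe_coe, LinearMap.lTensor_tmul]
      rw [show Rm S S.one r₀ = r₀ by simp [Rm, S.mul_one']]
      rfl
    | add x y hx hy => simp only [map_add, TensorProduct.add_tmul, hx, hy]
  | add x y hx hy => simp only [map_add, TensorProduct.add_tmul, hx, hy]

theorem comul_mul_exp (c y : A) :
    S.comul (S.mul (c ⊗ₜ y))
      = S.mul.lTensor A ((TensorProduct.assoc k A A A)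
          ((TensorProduct.map (Theta S ∘ₗ TensorProduct.mk k A A c) LinearMap.id)
            (S.comul y))) := by
  rw [comul_mul_pt]
  generalize S.comul y = t
  induction t using TensorProduct.induction_on with
  | zero => simp
  | tmul u v =>
    rw [mulAA_one_right]
    simp only [TensorProduct.map_tmul, LinearMap.comp_apply, LinearMap.id_coe, id_eq,
      TensorProduct.mk_apply]
    rw [Theta_tmul]
  | add x y hx hy => simp only [map_add, TensorProduct.tmul_add, hx, hy]

theorem Tm_rconv_id : rconv S (Tm S) LinearMap.id = etaEps S ∘ₗ S.mul := by
  refine TensorProduct.ext' fun c y => ?_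
  rw [rconv_tmul]
  have hR : (etaEps S ∘ₗ S.mul) (c ⊗ₜ y)
      = S.mul (S.antipode.rTensor A (S.comul (S.mul (c ⊗ₜ y)))) := by
    have h := LinearMap.congr_fun (antipode_left_map S) (S.mul (c ⊗ₜ[k] y))
    simp only [LinearMap.comp_apply] at h ⊢
    rw [h]
  rw [hR, comul_mul_exp]
  generalize S.comul y = t
  induction t using TensorProduct.induction_on with
  | zero => simp
  | tmul u v =>
    simp only [TensorProduct.map_tmul, LinearMap.comp_apply, LinearMap.id_coe, id_eq,
      TensorProduct.mk_apply]
    rw [show Tm S (c ⊗ₜ u) = S.mul (S.antipode.rTensor A (Theta S (c ⊗ₜ u))) from rfl]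
    generalize Theta S (c ⊗ₜ u) = w
    induction w using TensorProduct.induction_on with
    | zero => simp
    | tmul w₁ w₂ =>
      simp only [LinearMap.rTensor_tmul, TensorProduct.assoc_tmul, LinearEquiv.coe_coe,
        LinearMap.lTensor_tmul]
      rw [mul_assoc3]
    | add x y hx hy => simp only [map_add, TensorProduct.add_tmul, hx, hy]
  | add x y hx hy => simp only [map_add, TensorProduct.tmul_add, hx, hy]

theorem K1 (c u : A) : Tm S (c ⊗ₜ u) = S.counit c • S.antipode u := by
  have h1 : Tm S = rconv S (etaEps S ∘ₗ S.mul) S.antipode := by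
    calc Tm S = rconv S (Tm S) (etaEps S) := (rconv_unit S _).symm
    _ = rconv S (Tm S) (conv S LinearMap.id S.antipode) := by rw [conv_id_antipode]
    _ = rconv S (rconv S (Tm S) LinearMap.id) S.antipode := (rconv_assoc S _ _ _).symm
    _ = rconv S (etaEps S ∘ₗ S.mul) S.antipode := by rw [Tm_rconv_id]
  rw [h1, rconv_tmul]
  have key : ∀ t : A ⊗[k] A,
      S.mul (TensorProduct.map ((etaEps S ∘ₗ S.mul) ∘ₗ TensorProduct.mk k A A c)
        S.antipode t)
      = S.counit c • S.antipode ((TensorProduct.lid k A) ((S.counit.rTensor A) t)) := by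
    intro t
    induction t using TensorProduct.induction_on with
    | zero => simp
    | tmul α β =>
      simp only [TensorProduct.map_tmul, LinearMap.comp_apply, TensorProduct.mk_apply,
        etaEps, LinearMap.smulRight_apply, LinearMap.rTensor_tmul, TensorProduct.lid_tmul,
        LinearEquiv.coe_coe, map_smul]
      rw [S.counit_mul c α, ← TensorProduct.smul_tmul', map_smul, S.one_mul', mul_smul]
    | add x y hx hy => simp only [map_add, smul_add, hx, hy]
  rw [key, counit_pt]

end Conv

section DSec

variable (S : BHA k H A) (K : Submodule k A)

/-- `a ⊗ κ ↦ Σ S(a (κ₍₋₁₎·u)) κ₍₀₎`. -/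
noncomputable def Ju (hK : S.IsLeftCoidealSubalgebra K) (u : A) : A ⊗[k] ↥K →ₗ[k] A :=
  S.mul ∘ₗ TensorProduct.map (S.antipode ∘ₗ innerAH S u) K.subtype
    ∘ₗ (TensorProduct.assoc k A H ↥K).symm.toLinearMap ∘ₗ (coactK S K hK).lTensor A

theorem Ju_tmul (hK : S.IsLeftCoidealSubalgebra K) (u a : A) (κ : ↥K) :
    Ju S K hK u (a ⊗ₜ κ)
      = S.mul (TensorProduct.map ((S.antipode ∘ₗ innerAH S u) ∘ₗ TensorProduct.mk k A H a)
          K.subtype (coactK S K hK κ)) := by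
  simp only [Ju, LinearMap.comp_apply, LinearMap.lTensor_tmul, LinearEquiv.coe_coe]
  rw [mkassoc]

theorem Texp (hK : S.IsLeftCoidealSubalgebra K) (u : A) :
    S.mul ∘ₗ S.antipode.rTensor A ∘ₗ Lam1 S K hK u S.one = Ju S K hK u := by
  refine TensorProduct.ext' fun a κ => ?_
  simp only [LinearMap.comp_apply]
  rw [Lam1_tmul, Ju_tmul]
  generalize coactK S K hK κ = r
  induction r using TensorProduct.induction_on with
  | zero => simp
  | tmul h κ₀ =>
    simp only [TensorProduct.map_tmul, LinearMap.comp_apply, LinearMap.rTensor_tmul,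
      Submodule.coe_subtype, TensorProduct.mk_apply]
    rw [show Rm S S.one ((κ₀ : A)) = (κ₀ : A) by simp [Rm, S.mul_one']]
  | add x y hx hy => simp only [map_add, hx, hy]

theorem Tm_comulK (hK : S.IsLeftCoidealSubalgebra K) (c : ↥K) (u : A) :
    Ju S K hK u (comulK S K hK c) = Tm S ((c : A) ⊗ₜ u) := by
  rw [show Tm S ((c : A) ⊗ₜ u) = S.mul (S.antipode.rTensor A (Theta S ((c : A) ⊗ₜ u)))
    from rfl]
  rw [Theta_tmul, ← hcomulK S K hK c, MulAAexp S K hK _ u S.one]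
  exact (LinearMap.congr_fun (Texp S K hK u) (comulK S K hK c)).symm

theorem Dkey (hK : S.IsLeftCoidealSubalgebra K) (u v x : A) :
    (S.relK K).mkQ ∘ₗ (La S x).rTensor A ∘ₗ S.antipode.rTensor A ∘ₗ Lam1 S K hK u v
      = (S.relK K).mkQ ∘ₗ (TensorProduct.mk k A A).flip v ∘ₗ La S x ∘ₗ Ju S K hK u := by
  refine TensorProduct.ext' fun a κ => ?_
  simp only [LinearMap.comp_apply]
  rw [Lam1_tmul, Ju_tmul]
  generalize coactK S K hK κ = r
  induction r using TensorProduct.induction_on with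
  | zero => simp
  | tmul h κ₀ =>
    simp only [TensorProduct.map_tmul, LinearMap.comp_apply, LinearMap.rTensor_tmul,
      Submodule.coe_subtype, LinearMap.flip_apply, TensorProduct.mk_apply]
    rw [show Rm S v ((κ₀ : A)) = S.mul ((κ₀ : A) ⊗ₜ v) from rfl]
    rw [← Qmove S K _ κ₀ v]
    rw [show La S x (S.mul (S.antipode ((innerAH S u) (a ⊗ₜ h)) ⊗ₜ (κ₀ : A)))
        = S.mul (x ⊗ₜ S.mul (S.antipode ((innerAH S u) (a ⊗ₜ h)) ⊗ₜ (κ₀ : A))) from rfl]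
    rw [← mul_assoc3]
    rfl
  | add r₁ r₂ h₁ h₂ =>
    simp only [map_add, TensorProduct.add_tmul, h₁, h₂]

/-- Key collapse lemma for the inverse map. -/
theorem DLem (hK : S.IsLeftCoidealSubalgebra K) (c : ↥K) (x y : A) :
    (S.relK K).mkQ (gamma S (x ⊗ₜ S.mul ((c : A) ⊗ₜ y)))
      = S.counit (c : A) • (S.relK K).mkQ (gamma S (x ⊗ₜ y)) := by
  rw [gamma_tmul, gamma_tmul]
  rw [show Gam S (S.mul ((c : A) ⊗ₜ y))
      = S.antipode.rTensor A (S.comul (S.mul ((c : A) ⊗ₜ y))) from rfl]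
  rw [show Gam S y = S.antipode.rTensor A (S.comul y) from rfl]
  rw [comul_mul_pt]
  generalize S.comul y = s
  induction s using TensorProduct.induction_on with
  | zero => simp
  | tmul u v =>
    rw [← hcomulK S K hK c, MulAAexp S K hK _ u v]
    have h1 := LinearMap.congr_fun (Dkey S K hK u v x) (comulK S K hK c)
    simp only [LinearMap.comp_apply] at h1
    rw [h1, Tm_comulK S K hK c u, K1]
    simp only [map_smul, LinearMap.flip_apply, TensorProduct.mk_apply,
      LinearMap.rTensor_tmul]
  | add s₁ s₂ h₁ h₂ =>
    simp only [TensorProduct.tmul_add, map_add, smul_add, h₁, h₂]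

end DSec

section Can0

variable (S : BHA k H A) (K : Submodule k A)

/-- The canonical map on `A ⊗ A`. -/
noncomputable def can0 : A ⊗[k] A →ₗ[k] A ⊗[k] (A ⧸ S.KplusA K) :=
  S.mul.rTensor (A ⧸ S.KplusA K)
    ∘ₗ (TensorProduct.assoc k A A (A ⧸ S.KplusA K)).symm.toLinearMap
    ∘ₗ (S.deltaBar K).lTensor A

theorem can0_eq : can0 S K = (S.KplusA K).mkQ.lTensor A ∘ₗ beta S := by
  refine TensorProduct.ext' fun x y => ?_
  simp only [can0, LinearMap.comp_apply, LinearMap.lTensor_tmul, beta,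
    LinearEquiv.coe_coe, BHA.deltaBar]
  generalize S.comul y = t
  induction t using TensorProduct.induction_on with
  | zero => simp
  | tmul u w => simp [chi]
  | add a b ha hb => simp only [map_add, TensorProduct.tmul_add, ha, hb]

theorem can0_tmul (x y : A) :
    can0 S K (x ⊗ₜ y)
      = TensorProduct.map (La S x) (S.KplusA K).mkQ (S.comul y) := by
  rw [can0_eq]
  simp only [LinearMap.comp_apply]
  rw [beta_tmul]
  have h : (S.KplusA K).mkQ.lTensor A ∘ₗ (La S x).rTensor A
      = TensorProduct.map (La S x) (S.KplusA K).mkQ :=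
    TensorProduct.ext' fun a b => by simp
  exact LinearMap.congr_fun h (S.comul y)

theorem map_comp_rTensor {M Q' : Type u} [AddCommGroup M] [Module k M]
    [AddCommGroup Q'] [Module k Q'] (g : A →ₗ[k] M) (p' : A →ₗ[k] Q')
    (f : A →ₗ[k] A) (t : A ⊗[k] A) :
    TensorProduct.map g p' (f.rTensor A t)
      = TensorProduct.map (g ∘ₗ f) p' t := by
  have h : TensorProduct.map g p' ∘ₗ f.rTensor A = TensorProduct.map (g ∘ₗ f) p' :=
    TensorProduct.ext' fun a b => by simp
  exact LinearMap.congr_fun h t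

theorem relK_can0 (hK : S.IsLeftCoidealSubalgebra K) :
    S.relK K ≤ LinearMap.ker (can0 S K) := by
  refine Submodule.span_le.mpr ?_
  rintro z ⟨x, y, c, hc, rfl⟩
  simp only [SetLike.mem_coe, LinearMap.mem_ker, map_sub, sub_eq_zero]
  rw [can0_tmul, can0_tmul, La_mul, comul_mul_pt]
  rw [CORE S K hK (La S x) ⟨c, hc⟩ (S.comul y)]
  rw [map_comp_rTensor]

theorem KplusA_comul_kill (hK : S.IsLeftCoidealSubalgebra K) :
    ∀ z ∈ S.KplusA K,
      TensorProduct.map (S.KplusA K).mkQ (S.KplusA K).mkQ (S.comul z) = 0 := by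
  rintro z ⟨w, rfl⟩
  induction w using TensorProduct.induction_on with
  | zero => simp
  | tmul cp y =>
    simp only [LinearMap.comp_apply, LinearMap.rTensor_tmul, Submodule.coe_subtype]
    rw [comul_mul_pt]
    rw [CORE S K hK (S.KplusA K).mkQ ⟨(cp : A), cp.2.1⟩ (S.comul y)]
    generalize S.comul y = t
    induction t using TensorProduct.induction_on with
    | zero => simp
    | tmul u v =>
      simp only [LinearMap.rTensor_tmul, TensorProduct.map_tmul]
      have h0 : (S.KplusA K).mkQ (La S (cp : A) u) = 0 := by
        rw [Submodule.mkQ_apply, Submodule.Quotient.mk_eq_zero]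
        exact ⟨cp ⊗ₜ u, rfl⟩
      rw [h0, TensorProduct.zero_tmul]
    | add a b ha hb => simp only [map_add, ha, hb, add_zero]
  | add a b ha hb => simp only [map_add, ha, hb, add_zero]

theorem KplusA_coact_kill (hK : S.IsLeftCoidealSubalgebra K) :
    ∀ z ∈ S.KplusA K, (S.KplusA K).mkQ.lTensor H (S.coact z) = 0 := by
  rintro z ⟨w, rfl⟩
  induction w using TensorProduct.induction_on with
  | zero => simp
  | tmul cp y =>
    simp only [LinearMap.comp_apply, LinearMap.rTensor_tmul, Submodule.coe_subtype]
    rw [CORE2 S K hK ⟨(cp : A), cp.2.1⟩ y]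
    rw [show S.counit (cp : A) = 0 from cp.2.2, zero_smul]
  | add a b ha hb => simp only [map_add, ha, hb, add_zero]

/-- The right coaction on `A ⊗ A` with values in the quotients. -/
noncomputable def delta0 :
    A ⊗[k] A →ₗ[k] ((A ⊗[k] A) ⧸ S.relK K) ⊗[k] (A ⧸ S.KplusA K) :=
  (S.relK K).mkQ.rTensor (A ⧸ S.KplusA K)
    ∘ₗ (TensorProduct.assoc k A A (A ⧸ S.KplusA K)).symm.toLinearMap
    ∘ₗ (S.deltaBar K).lTensor A

theorem delta0_tmul (x y : A) :
    delta0 S K (x ⊗ₜ y)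
      = TensorProduct.map ((S.relK K).mkQ ∘ₗ TensorProduct.mk k A A x)
          (S.KplusA K).mkQ (S.comul y) := by
  simp only [delta0, LinearMap.comp_apply, LinearMap.lTensor_tmul, BHA.deltaBar,
    LinearEquiv.coe_coe]
  generalize S.comul y = t
  induction t using TensorProduct.induction_on with
  | zero => simp
  | tmul u w => simp
  | add a b ha hb => simp only [map_add, TensorProduct.tmul_add, ha, hb]



theorem relK_delta0 (hK : S.IsLeftCoidealSubalgebra K) :
    S.relK K ≤ LinearMap.ker (delta0 S K) := by
  refine Submodule.span_le.mpr ?_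
  rintro z ⟨x, y, c, hc, rfl⟩
  simp only [SetLike.mem_coe, LinearMap.mem_ker, map_sub, sub_eq_zero]
  rw [delta0_tmul, delta0_tmul, comul_mul_pt]
  rw [CORE S K hK ((S.relK K).mkQ ∘ₗ TensorProduct.mk k A A x) ⟨c, hc⟩ (S.comul y)]
  rw [map_comp_rTensor]
  congr 2
  refine LinearMap.ext fun w => ?_
  simp only [LinearMap.comp_apply, TensorProduct.mk_apply]
  exact Qmove S K x ⟨c, hc⟩ w

/-- The diagonal `H`-coaction on `A ⊗ A` with values in the quotient. -/
noncomputable def rho0 : A ⊗[k] A →ₗ[k] H ⊗[k] ((A ⊗[k] A) ⧸ S.relK K) :=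
  (S.relK K).mkQ.lTensor H ∘ₗ diagCoact k S.coact S.coact

theorem relK_rho0 (hK : S.IsLeftCoidealSubalgebra K) :
    S.relK K ≤ LinearMap.ker (rho0 S K) := by
  refine Submodule.span_le.mpr ?_
  rintro z ⟨x, y, c, hc, rfl⟩
  simp only [SetLike.mem_coe, LinearMap.mem_ker, map_sub, sub_eq_zero, rho0,
    LinearMap.comp_apply]
  exact CORE3 S K hK ⟨c, hc⟩ x y

end Can0

section Colin

variable (S : BHA k H A)

noncomputable def B2 (X : H ⊗[k] A) : H ⊗[k] A →ₗ[k] H ⊗[k] A :=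
  S.mul.lTensor H ∘ₗ (LinearMap.mul' k H).rTensor (A ⊗[k] A)
    ∘ₗ (tensorTensorTensorComm k H A H A).toLinearMap
    ∘ₗ TensorProduct.mk k (H ⊗[k] A) (H ⊗[k] A) X

noncomputable def RX (X : H ⊗[k] A) :
    H ⊗[k] (A ⊗[k] A) →ₗ[k] H ⊗[k] (A ⊗[k] A) :=
  TensorProduct.map (LinearMap.mul' k H) (chi S)
    ∘ₗ (tensorTensorTensorComm k H A H (A ⊗[k] A)).toLinearMap
    ∘ₗ TensorProduct.mk k (H ⊗[k] A) (H ⊗[k] (A ⊗[k] A)) X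

theorem coact_La (x : A) :
    S.coact ∘ₗ La S x = B2 S (S.coact x) ∘ₗ S.coact := by
  refine LinearMap.ext fun y₁ => ?_
  simp only [LinearMap.comp_apply, B2, TensorProduct.mk_apply, LinearEquiv.coe_coe]
  rw [show La S x y₁ = S.mul (x ⊗ₜ y₁) from rfl, coact_mul_pt]

theorem Fact1 (X : H ⊗[k] A) :
    (LinearMap.mul' k H).rTensor (A ⊗[k] A)
        ∘ₗ (tensorTensorTensorComm k H A H A).toLinearMap
        ∘ₗ (B2 S X).rTensor (H ⊗[k] A)
      = RX S X ∘ₗ (LinearMap.mul' k H).rTensor (A ⊗[k] A)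
        ∘ₗ (tensorTensorTensorComm k H A H A).toLinearMap := by
  refine TensorProduct.ext' fun w₁ w₂ => ?_
  induction w₁ using TensorProduct.induction_on with
  | zero => simp
  | tmul h₁ a₁ =>
    induction w₂ using TensorProduct.induction_on with
    | zero => simp
    | tmul h₂ a₂ =>
      induction X using TensorProduct.induction_on with
      | zero => simp [B2, RX]
      | tmul g x₀ =>
        simp only [LinearMap.comp_apply, B2, RX, TensorProduct.mk_apply,
          LinearEquiv.coe_coe, tensorTensorTensorComm_tmul, LinearMap.rTensor_tmul,
          LinearMap.mul'_apply, LinearMap.lTensor_tmul, TensorProduct.map_tmul]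
        rw [mul_assoc]
        simp [chi]
      | add X₁ X₂ hX₁ hX₂ =>
        simp only [LinearMap.comp_apply, B2, RX, TensorProduct.mk_apply,
          LinearEquiv.coe_coe, TensorProduct.add_tmul, map_add, LinearMap.add_comp,
          LinearMap.comp_add, LinearMap.add_apply, LinearMap.rTensor_add] at hX₁ hX₂ ⊢
        rw [hX₁, hX₂]
    | add y₁ y₂ hy₁ hy₂ =>
      simp only [TensorProduct.tmul_add, map_add, hy₁, hy₂]
  | add z₁ z₂ hz₁ hz₂ =>
    simp only [TensorProduct.add_tmul, map_add, hz₁, hz₂]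

theorem Fact3 (X : H ⊗[k] A) :
    RX S X ∘ₗ S.comul.lTensor H
      = (beta S).lTensor H ∘ₗ (LinearMap.mul' k H).rTensor (A ⊗[k] A)
        ∘ₗ (tensorTensorTensorComm k H A H A).toLinearMap
        ∘ₗ TensorProduct.mk k (H ⊗[k] A) (H ⊗[k] A) X := by
  refine TensorProduct.ext' fun h y₀ => ?_
  induction X using TensorProduct.induction_on with
  | zero => simp [RX]
  | tmul g x₀ =>
    simp only [LinearMap.comp_apply, RX, TensorProduct.mk_apply, LinearEquiv.coe_coe,
      LinearMap.lTensor_tmul, tensorTensorTensorComm_tmul, TensorProduct.map_tmul,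
      LinearMap.rTensor_tmul, LinearMap.mul'_apply]
    rw [chi_tmul, ← beta_tmul]
  | add X₁ X₂ hX₁ hX₂ =>
    simp only [RX, LinearMap.comp_apply, TensorProduct.mk_apply] at hX₁ hX₂ ⊢
    simp only [TensorProduct.add_tmul, map_add, hX₁, hX₂]

theorem BetaColin :
    diagCoact k S.coact S.coact ∘ₗ beta S
      = (beta S).lTensor H ∘ₗ diagCoact k S.coact S.coact := by
  refine TensorProduct.ext' fun x y => ?_
  simp only [LinearMap.comp_apply, diagCoact, LinearEquiv.coe_coe, TensorProduct.map_tmul]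
  rw [beta_tmul]
  have hcomp : TensorProduct.map S.coact S.coact ∘ₗ (La S x).rTensor A
      = (B2 S (S.coact x)).rTensor (H ⊗[k] A) ∘ₗ TensorProduct.map S.coact S.coact := by
    refine TensorProduct.ext' fun a b => ?_
    simp only [LinearMap.comp_apply, TensorProduct.map_tmul, LinearMap.rTensor_tmul]
    rw [show S.coact (La S x a) = (S.coact ∘ₗ La S x) a from rfl, coact_La]
    rfl
  rw [show TensorProduct.map S.coact S.coact ((La S x).rTensor A (S.comul y))
      = (B2 S (S.coact x)).rTensor (H ⊗[k] A)
          (TensorProduct.map S.coact S.coact (S.comul y)) from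
    LinearMap.congr_fun hcomp (S.comul y)]
  have h1 := LinearMap.congr_fun (Fact1 S (S.coact x))
    (TensorProduct.map S.coact S.coact (S.comul y))
  simp only [LinearMap.comp_apply, LinearEquiv.coe_coe] at h1
  rw [h1]
  have h2 := LinearMap.congr_fun S.comul_colinear y
  simp only [LinearMap.comp_apply, diagCoact, LinearEquiv.coe_coe] at h2
  rw [h2]
  have h3 := LinearMap.congr_fun (Fact3 S (S.coact x)) (S.coact y)
  simp only [LinearMap.comp_apply, TensorProduct.mk_apply, LinearEquiv.coe_coe] at h3
  rw [h3]

end Colin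

section Final

variable (S : BHA k H A) (K : Submodule k A)

theorem psi_kills (hK : S.IsLeftCoidealSubalgebra K) :
    ∀ w' : A ⊗[k] ↥(S.KplusA K),
      (S.relK K).mkQ (gamma S ((S.KplusA K).subtype.lTensor A w')) = 0 := by
  intro w'
  induction w' using TensorProduct.induction_on with
  | zero => simp
  | tmul x z =>
    obtain ⟨w₂, hw₂⟩ := z.2
    simp only [LinearMap.lTensor_tmul, Submodule.coe_subtype]
    rw [← hw₂]
    clear hw₂ z
    induction w₂ using TensorProduct.induction_on with
    | zero => simp
    | tmul cp y =>
      simp only [LinearMap.comp_apply, LinearMap.rTensor_tmul, Submodule.coe_subtype]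
      rw [DLem S K hK ⟨(cp : A), cp.2.1⟩ x y]
      rw [show S.counit (cp : A) = 0 from cp.2.2, zero_smul]
    | add a b ha hb =>
      simp only [map_add, TensorProduct.tmul_add, ha, hb, add_zero]
  | add a b ha hb => simp only [map_add, ha, hb, add_zero]

theorem map_id_comp_pt {M N P Q' : Type u} [AddCommGroup M] [Module k M]
    [AddCommGroup N] [Module k N] [AddCommGroup P] [Module k P]
    [AddCommGroup Q'] [Module k Q'] (f : N →ₗ[k] P) (g : P →ₗ[k] Q')
    (z : M ⊗[k] N) :
    TensorProduct.map LinearMap.id g (TensorProduct.map LinearMap.id f z)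
      = TensorProduct.map LinearMap.id (g ∘ₗ f) z := by
  have h : TensorProduct.map (LinearMap.id (M := M)) g
        ∘ₗ TensorProduct.map LinearMap.id f
      = TensorProduct.map LinearMap.id (g ∘ₗ f) :=
    TensorProduct.ext' fun a b => by simp
  exact LinearMap.congr_fun h z

/-- naturality step used for the right colinearity. -/
theorem assoc_step (x : A) (w : (A ⊗[k] A) ⊗[k] A) :
    (TensorProduct.assoc k A (A ⧸ S.KplusA K) (A ⧸ S.KplusA K)).symm
        (TensorProduct.map (La S x)
          (TensorProduct.map (S.KplusA K).mkQ (S.KplusA K).mkQ)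
          ((TensorProduct.assoc k A A A) w))
      = TensorProduct.map (TensorProduct.map (La S x) (S.KplusA K).mkQ)
          (S.KplusA K).mkQ w := by
  induction w using TensorProduct.induction_on with
  | zero => simp
  | tmul s y₃ =>
    induction s using TensorProduct.induction_on with
    | zero => simp
    | tmul y₁ y₂ => simp
    | add a b ha hb => simp only [TensorProduct.add_tmul, map_add, ha, hb]
  | add a b ha hb => simp only [map_add, ha, hb]

theorem diag_p_nat (u : H ⊗[k] A) (v : H ⊗[k] A) :
    (LinearMap.mul' k H).rTensor (A ⊗[k] (A ⧸ S.KplusA K))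
        ((tensorTensorTensorComm k H A H (A ⧸ S.KplusA K))
          (u ⊗ₜ ((S.KplusA K).mkQ.lTensor H v)))
      = TensorProduct.map LinearMap.id
          (TensorProduct.map LinearMap.id (S.KplusA K).mkQ)
          ((LinearMap.mul' k H).rTensor (A ⊗[k] A)
            ((tensorTensorTensorComm k H A H A) (u ⊗ₜ v))) := by
  induction u using TensorProduct.induction_on with
  | zero => simp
  | tmul h₁ a₀ =>
    induction v using TensorProduct.induction_on with
    | zero => simp
    | tmul h₂ b₀ => simp
    | add a b ha hb => simp only [map_add, TensorProduct.tmul_add, ha, hb]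
  | add a b ha hb => simp only [map_add, TensorProduct.add_tmul, ha, hb]

end Final

end CanAux

end CanAux

/-- The canonical map `can : A ⊗_K A → A ⊗ Ā`,
`x ⊗ y ↦ x y⁽¹⁾ ⊗ (class of y⁽²⁾)`, is bijective, right `Ā`-colinear and left
`H`-colinear (with the induced coalgebra structure `Δ_Ā` on `Ā`, the induced `H`-coaction
on `Ā`, the right `Ā`-coaction and the diagonal `H`-coaction on `A ⊗_K A`). -/
theorem canonical_map_bijective_colinear
    {k H A : Type u} [Field k] [Ring H] [HopfAlgebra k H]
    [AddCommGroup A] [Module k A] (S : BHA k H A)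
    (hbij : Function.Bijective (HopfAlgebra.antipode (R := k) (A := H)))
    (K : Submodule k A) (hK : S.IsLeftCoidealSubalgebra K) :
    ∃ (ΔQ : (A ⧸ S.KplusA K) →ₗ[k] (A ⧸ S.KplusA K) ⊗[k] (A ⧸ S.KplusA K))
      (coactQ : (A ⧸ S.KplusA K) →ₗ[k] H ⊗[k] (A ⧸ S.KplusA K))
      (canM : ((A ⊗[k] A) ⧸ S.relK K) →ₗ[k] A ⊗[k] (A ⧸ S.KplusA K))
      (δq : ((A ⊗[k] A) ⧸ S.relK K) →ₗ[k] ((A ⊗[k] A) ⧸ S.relK K) ⊗[k] (A ⧸ S.KplusA K))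
      (ρq : ((A ⊗[k] A) ⧸ S.relK K) →ₗ[k] H ⊗[k] ((A ⊗[k] A) ⧸ S.relK K)),
      -- the induced comultiplication on `Ā`
      ΔQ ∘ₗ (S.KplusA K).mkQ = map (S.KplusA K).mkQ (S.KplusA K).mkQ ∘ₗ S.comul ∧
      -- the induced `H`-coaction on `Ā`
      coactQ ∘ₗ (S.KplusA K).mkQ = (S.KplusA K).mkQ.lTensor H ∘ₗ S.coact ∧
      -- `can` is induced by `x ⊗ y ↦ x y⁽¹⁾ ⊗ (class of y⁽²⁾)`
      canM ∘ₗ (S.relK K).mkQ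
        = S.mul.rTensor (A ⧸ S.KplusA K)
            ∘ₗ (TensorProduct.assoc k A A (A ⧸ S.KplusA K)).symm.toLinearMap
            ∘ₗ (S.deltaBar K).lTensor A ∧
      -- the right `Ā`-coaction on `A ⊗_K A`
      δq ∘ₗ (S.relK K).mkQ
        = (S.relK K).mkQ.rTensor (A ⧸ S.KplusA K)
            ∘ₗ (TensorProduct.assoc k A A (A ⧸ S.KplusA K)).symm.toLinearMap
            ∘ₗ (S.deltaBar K).lTensor A ∧
      -- the diagonal `H`-coaction on `A ⊗_K A`
      ρq ∘ₗ (S.relK K).mkQ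
        = (S.relK K).mkQ.lTensor H ∘ₗ diagCoact k S.coact S.coact ∧
      -- `can` is bijective
      Function.Bijective canM ∧
      -- `can` is right `Ā`-colinear
      ((TensorProduct.assoc k A (A ⧸ S.KplusA K) (A ⧸ S.KplusA K)).symm.toLinearMap
          ∘ₗ ΔQ.lTensor A) ∘ₗ canM
        = canM.rTensor (A ⧸ S.KplusA K) ∘ₗ δq ∧
      -- `can` is left `H`-colinear
      diagCoact k S.coact coactQ ∘ₗ canM = canM.lTensor H ∘ₗ ρq := by
  classical
  have hΔker : S.KplusA K ≤ LinearMap.ker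
      (TensorProduct.map (S.KplusA K).mkQ (S.KplusA K).mkQ ∘ₗ S.comul) := by
    intro z hz
    simp only [LinearMap.mem_ker, LinearMap.comp_apply]
    exact CanAux.KplusA_comul_kill S K hK z hz
  have hcoker : S.KplusA K ≤ LinearMap.ker
      ((S.KplusA K).mkQ.lTensor H ∘ₗ S.coact) := by
    intro z hz
    simp only [LinearMap.mem_ker, LinearMap.comp_apply]
    exact CanAux.KplusA_coact_kill S K hK z hz
  have hcanM : ∀ w : A ⊗[k] A,
      ((S.relK K).liftQ (CanAux.can0 S K) (CanAux.relK_can0 S K hK)) ((S.relK K).mkQ w)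
        = CanAux.can0 S K w :=
    LinearMap.congr_fun (Submodule.liftQ_mkQ (S.relK K) (CanAux.can0 S K)
      (CanAux.relK_can0 S K hK))
  have hδ0 : ∀ w : A ⊗[k] A,
      ((S.relK K).liftQ (CanAux.delta0 S K) (CanAux.relK_delta0 S K hK))
          ((S.relK K).mkQ w)
        = CanAux.delta0 S K w :=
    LinearMap.congr_fun (Submodule.liftQ_mkQ (S.relK K) (CanAux.delta0 S K)
      (CanAux.relK_delta0 S K hK))
  have hρ0 : ∀ w : A ⊗[k] A,
      ((S.relK K).liftQ (CanAux.rho0 S K) (CanAux.relK_rho0 S K hK)) ((S.relK K).mkQ w)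
        = CanAux.rho0 S K w :=
    LinearMap.congr_fun (Submodule.liftQ_mkQ (S.relK K) (CanAux.rho0 S K)
      (CanAux.relK_rho0 S K hK))
  have hΔQpt : ∀ b : A,
      ((S.KplusA K).liftQ
          (TensorProduct.map (S.KplusA K).mkQ (S.KplusA K).mkQ ∘ₗ S.comul) hΔker)
        ((S.KplusA K).mkQ b)
      = TensorProduct.map (S.KplusA K).mkQ (S.KplusA K).mkQ (S.comul b) :=
    LinearMap.congr_fun (Submodule.liftQ_mkQ (S.KplusA K)
      (TensorProduct.map (S.KplusA K).mkQ (S.KplusA K).mkQ ∘ₗ S.comul) hΔker)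
  have hcoQpt : ∀ b : A,
      ((S.KplusA K).liftQ ((S.KplusA K).mkQ.lTensor H ∘ₗ S.coact) hcoker)
        ((S.KplusA K).mkQ b)
      = (S.KplusA K).mkQ.lTensor H (S.coact b) :=
    LinearMap.congr_fun (Submodule.liftQ_mkQ (S.KplusA K)
      ((S.KplusA K).mkQ.lTensor H ∘ₗ S.coact) hcoker)
  refine ⟨(S.KplusA K).liftQ
        (TensorProduct.map (S.KplusA K).mkQ (S.KplusA K).mkQ ∘ₗ S.comul) hΔker,
      (S.KplusA K).liftQ ((S.KplusA K).mkQ.lTensor H ∘ₗ S.coact) hcoker,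
      (S.relK K).liftQ (CanAux.can0 S K) (CanAux.relK_can0 S K hK),
      (S.relK K).liftQ (CanAux.delta0 S K) (CanAux.relK_delta0 S K hK),
      (S.relK K).liftQ (CanAux.rho0 S K) (CanAux.relK_rho0 S K hK),
      Submodule.liftQ_mkQ _ _ _, Submodule.liftQ_mkQ _ _ _,
      Submodule.liftQ_mkQ _ _ _, Submodule.liftQ_mkQ _ _ _,
      Submodule.liftQ_mkQ _ _ _, ?_, ?_, ?_⟩
  · -- bijectivity
    constructor
    · -- injective
      rw [← LinearMap.ker_eq_bot]
      rw [Submodule.eq_bot_iff]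
      intro u hu
      obtain ⟨w, rfl⟩ := Submodule.mkQ_surjective (S.relK K) u
      rw [LinearMap.mem_ker, hcanM w, CanAux.can0_eq, LinearMap.comp_apply] at hu
      have hmem : CanAux.beta S w ∈ LinearMap.ker
          (LinearMap.lTensor A (S.KplusA K).mkQ) := LinearMap.mem_ker.mpr hu
      rw [lTensor_mkQ A (S.KplusA K)] at hmem
      obtain ⟨w', hw'⟩ := hmem
      have h1 : w = CanAux.gamma S (CanAux.beta S w) :=
        (LinearMap.congr_fun (CanAux.gamma_beta S) w).symm
      rw [h1, ← hw']
      exact CanAux.psi_kills S K hK w'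
    · -- surjective
      intro z
      obtain ⟨w, hw⟩ := LinearMap.lTensor_surjective A
        (Submodule.mkQ_surjective (S.KplusA K)) z
      refine ⟨(S.relK K).mkQ (CanAux.gamma S w), ?_⟩
      rw [hcanM (CanAux.gamma S w), CanAux.can0_eq, LinearMap.comp_apply]
      rw [show CanAux.beta S (CanAux.gamma S w) = w from
        LinearMap.congr_fun (CanAux.beta_gamma S) w]
      exact hw
  · -- right Ā-colinearity
    refine Submodule.linearMap_qext _ ?_
    refine TensorProduct.ext' fun x y => ?_
    simp only [LinearMap.comp_apply]
    rw [hcanM (x ⊗ₜ y), hδ0 (x ⊗ₜ y)]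
    rw [CanAux.can0_tmul, CanAux.delta0_tmul]
    have hLT : ∀ t : A ⊗[k] A,
        LinearMap.lTensor A ((S.KplusA K).liftQ
            (TensorProduct.map (S.KplusA K).mkQ (S.KplusA K).mkQ ∘ₗ S.comul) hΔker)
          (TensorProduct.map (CanAux.La S x) (S.KplusA K).mkQ t)
        = TensorProduct.map (CanAux.La S x)
            ((TensorProduct.map (S.KplusA K).mkQ (S.KplusA K).mkQ) ∘ₗ S.comul) t := by
      intro t
      have h : LinearMap.lTensor A ((S.KplusA K).liftQ
            (TensorProduct.map (S.KplusA K).mkQ (S.KplusA K).mkQ ∘ₗ S.comul) hΔker)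
          ∘ₗ TensorProduct.map (CanAux.La S x) (S.KplusA K).mkQ
        = TensorProduct.map (CanAux.La S x)
            ((TensorProduct.map (S.KplusA K).mkQ (S.KplusA K).mkQ) ∘ₗ S.comul) := by
        refine TensorProduct.ext' fun a b => ?_
        simp only [LinearMap.comp_apply, TensorProduct.map_tmul, LinearMap.lTensor_tmul]
        rw [hΔQpt b]
      exact LinearMap.congr_fun h t
    rw [hLT]
    have hRT : ∀ t : A ⊗[k] A,
        LinearMap.rTensor (A ⧸ S.KplusA K)
            ((S.relK K).liftQ (CanAux.can0 S K) (CanAux.relK_can0 S K hK))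
          (TensorProduct.map ((S.relK K).mkQ ∘ₗ TensorProduct.mk k A A x)
            (S.KplusA K).mkQ t)
        = TensorProduct.map
            ((TensorProduct.map (CanAux.La S x) (S.KplusA K).mkQ) ∘ₗ S.comul)
            (S.KplusA K).mkQ t := by
      intro t
      have h : LinearMap.rTensor (A ⧸ S.KplusA K)
            ((S.relK K).liftQ (CanAux.can0 S K) (CanAux.relK_can0 S K hK))
          ∘ₗ TensorProduct.map ((S.relK K).mkQ ∘ₗ TensorProduct.mk k A A x)
              (S.KplusA K).mkQ
        = TensorProduct.map
            ((TensorProduct.map (CanAux.La S x) (S.KplusA K).mkQ) ∘ₗ S.comul)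
            (S.KplusA K).mkQ := by
        refine TensorProduct.ext' fun a b => ?_
        simp only [LinearMap.comp_apply, TensorProduct.map_tmul, LinearMap.rTensor_tmul,
          TensorProduct.mk_apply]
        rw [hcanM (x ⊗ₜ a), CanAux.can0_tmul]
      exact LinearMap.congr_fun h t
    rw [hRT]
    have hsplit1 : ∀ t : A ⊗[k] A,
        TensorProduct.map (CanAux.La S x)
            ((TensorProduct.map (S.KplusA K).mkQ (S.KplusA K).mkQ) ∘ₗ S.comul) t
        = TensorProduct.map (CanAux.La S x)
            (TensorProduct.map (S.KplusA K).mkQ (S.KplusA K).mkQ)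
            (S.comul.lTensor A t) := by
      intro t
      have h : TensorProduct.map (CanAux.La S x)
            ((TensorProduct.map (S.KplusA K).mkQ (S.KplusA K).mkQ) ∘ₗ S.comul)
          = TensorProduct.map (CanAux.La S x)
              (TensorProduct.map (S.KplusA K).mkQ (S.KplusA K).mkQ)
            ∘ₗ S.comul.lTensor A := TensorProduct.ext' fun a b => by simp
      exact LinearMap.congr_fun h t
    have hsplit2 : ∀ t : A ⊗[k] A,
        TensorProduct.map
            ((TensorProduct.map (CanAux.La S x) (S.KplusA K).mkQ) ∘ₗ S.comul)
            (S.KplusA K).mkQ t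
        = TensorProduct.map (TensorProduct.map (CanAux.La S x) (S.KplusA K).mkQ)
            (S.KplusA K).mkQ (S.comul.rTensor A t) := by
      intro t
      have h : TensorProduct.map
            ((TensorProduct.map (CanAux.La S x) (S.KplusA K).mkQ) ∘ₗ S.comul)
            (S.KplusA K).mkQ
          = TensorProduct.map (TensorProduct.map (CanAux.La S x) (S.KplusA K).mkQ)
              (S.KplusA K).mkQ ∘ₗ S.comul.rTensor A := TensorProduct.ext' fun a b => by simp
      exact LinearMap.congr_fun h t
    rw [hsplit1, hsplit2, CanAux.coassoc_pt]
    exact CanAux.assoc_step S K x ((S.comul.rTensor A) (S.comul y))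
  · -- H-colinearity
    refine Submodule.linearMap_qext _ ?_
    refine TensorProduct.ext' fun x y => ?_
    simp only [LinearMap.comp_apply]
    rw [hcanM (x ⊗ₜ y), hρ0 (x ⊗ₜ y)]
    have hc0 : CanAux.can0 S K (x ⊗ₜ[k] y)
        = LinearMap.lTensor A (S.KplusA K).mkQ (CanAux.beta S (x ⊗ₜ y)) := by
      rw [CanAux.can0_eq]
      rfl
    rw [hc0]
    have hL : diagCoact k S.coact
          ((S.KplusA K).liftQ ((S.KplusA K).mkQ.lTensor H ∘ₗ S.coact) hcoker)
          (LinearMap.lTensor A (S.KplusA K).mkQ (CanAux.beta S (x ⊗ₜ y)))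
        = TensorProduct.map LinearMap.id
            (TensorProduct.map LinearMap.id (S.KplusA K).mkQ)
            (diagCoact k S.coact S.coact (CanAux.beta S (x ⊗ₜ y))) := by
      have h : diagCoact k S.coact
            ((S.KplusA K).liftQ ((S.KplusA K).mkQ.lTensor H ∘ₗ S.coact) hcoker)
            ∘ₗ LinearMap.lTensor A (S.KplusA K).mkQ
          = TensorProduct.map LinearMap.id
              (TensorProduct.map LinearMap.id (S.KplusA K).mkQ)
            ∘ₗ diagCoact k S.coact S.coact := by
        refine TensorProduct.ext' fun a b => ?_
        simp only [LinearMap.comp_apply, LinearMap.lTensor_tmul, diagCoact,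
          LinearEquiv.coe_coe, TensorProduct.map_tmul]
        rw [hcoQpt b]
        exact CanAux.diag_p_nat S K (S.coact a) (S.coact b)
      exact LinearMap.congr_fun h _
    rw [hL]
    have hBC := LinearMap.congr_fun (CanAux.BetaColin S) (x ⊗ₜ[k] y)
    simp only [LinearMap.comp_apply] at hBC
    rw [hBC]
    rw [show CanAux.rho0 S K (x ⊗ₜ y)
        = (S.relK K).mkQ.lTensor H (diagCoact k S.coact S.coact (x ⊗ₜ y)) from rfl]
    have hR : ∀ z : H ⊗[k] (A ⊗[k] A),
        LinearMap.lTensor H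
            ((S.relK K).liftQ (CanAux.can0 S K) (CanAux.relK_can0 S K hK))
            ((S.relK K).mkQ.lTensor H z)
        = TensorProduct.map LinearMap.id (CanAux.can0 S K) z := by
      intro z
      have h : LinearMap.lTensor H
            ((S.relK K).liftQ (CanAux.can0 S K) (CanAux.relK_can0 S K hK))
            ∘ₗ (S.relK K).mkQ.lTensor H
          = TensorProduct.map LinearMap.id (CanAux.can0 S K) := by
        refine TensorProduct.ext' fun h₀ z₀ => ?_
        simp only [LinearMap.comp_apply, LinearMap.lTensor_tmul, TensorProduct.map_tmul]
        rw [hcanM z₀]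
        rfl
      exact LinearMap.congr_fun h z
    rw [hR]
    have hfin : ∀ z : H ⊗[k] (A ⊗[k] A),
        TensorProduct.map LinearMap.id
            (TensorProduct.map LinearMap.id (S.KplusA K).mkQ)
            (LinearMap.lTensor H (CanAux.beta S) z)
        = TensorProduct.map LinearMap.id (CanAux.can0 S K) z := by
      intro z
      rw [show LinearMap.lTensor H (CanAux.beta S) z
          = TensorProduct.map LinearMap.id (CanAux.beta S) z from rfl]
      rw [CanAux.map_id_comp_pt (CanAux.beta S)
        (TensorProduct.map LinearMap.id (S.KplusA K).mkQ) z]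
      rw [CanAux.can0_eq]
      rfl
    exact hfin _
end

section
/- Let D be a cosemisimple bialgebra and C a coalgebra in left D-comodules. Then for any left D-comodule X, the object X ⊗ C with right C-coaction id_X ⊗ Δ and diagonal left D-coaction is an injective object in the category of right C-comodules in left D-comodules. -/
open TensorProduct LinearMap

universe u
set_option maxHeartbeats 1000000

section ComodComod

variable (k : Type u) [Field k] {D C : Type u} [Ring D] [Bialgebra k D]
  [AddCommGroup C] [Module k C]

/-- `C` (with comultiplication `ΔC`, counit `εC` and `D`-coaction `ρC`) is a coalgebra in
the monoidal category of left `D`-comodules. -/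
structure IsCoalgInComod (ρC : C →ₗ[k] D ⊗[k] C) (ΔC : C →ₗ[k] C ⊗[k] C)
    (εC : C →ₗ[k] k) : Prop where
  coalg : IsComod k ΔC ΔC εC
  counit_right : (TensorProduct.rid k C).toLinearMap ∘ₗ εC.lTensor C ∘ₗ ΔC = LinearMap.id
  comod : IsComod k ρC (Coalgebra.comul (R := k) (A := D)) (Coalgebra.counit (R := k) (A := D))
  comul_colinear : diagCoact k ρC ρC ∘ₗ ΔC = ΔC.lTensor D ∘ₗ ρC
  counit_colinear : ∀ c : C, εC.lTensor D (ρC c) = εC c • ((1 : D) ⊗ₜ (1 : k))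

/-- An object of the category of right `C`-comodules in left `D`-comodules. -/
def IsComodComodObj (ρC : C →ₗ[k] D ⊗[k] C) (ΔC : C →ₗ[k] C ⊗[k] C) (εC : C →ₗ[k] k)
    {V : Type u} [AddCommGroup V] [Module k V]
    (ρV : V →ₗ[k] D ⊗[k] V) (δV : V →ₗ[k] V ⊗[k] C) : Prop :=
  IsComod k ρV (Coalgebra.comul (R := k) (A := D)) (Coalgebra.counit (R := k) (A := D)) ∧
  IsRightComod k δV ΔC εC ∧
  diagCoact k ρV ρC ∘ₗ δV = δV.lTensor D ∘ₗ ρV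

/-- A morphism in the category of right `C`-comodules in left `D`-comodules. -/
def IsComodComodHom {V W : Type u} [AddCommGroup V] [Module k V] [AddCommGroup W] [Module k W]
    (ρV : V →ₗ[k] D ⊗[k] V) (δV : V →ₗ[k] V ⊗[k] C)
    (ρW : W →ₗ[k] D ⊗[k] W) (δW : W →ₗ[k] W ⊗[k] C) (f : V →ₗ[k] W) : Prop :=
  ρW ∘ₗ f = f.lTensor D ∘ₗ ρV ∧ δW ∘ₗ f = f.rTensor C ∘ₗ δV

/-- `V` is an injective object in the category of right `C`-comodules in left
`D`-comodules. -/
def IsInjObj (ρC : C →ₗ[k] D ⊗[k] C) (ΔC : C →ₗ[k] C ⊗[k] C) (εC : C →ₗ[k] k)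
    {V : Type u} [AddCommGroup V] [Module k V]
    (ρV : V →ₗ[k] D ⊗[k] V) (δV : V →ₗ[k] V ⊗[k] C) : Prop :=
  ∀ (U : Type u) [AddCommGroup U] [Module k U]
    (W : Type u) [AddCommGroup W] [Module k W]
    (ρU : U →ₗ[k] D ⊗[k] U) (δU : U →ₗ[k] U ⊗[k] C)
    (ρW : W →ₗ[k] D ⊗[k] W) (δW : W →ₗ[k] W ⊗[k] C),
    IsComodComodObj k ρC ΔC εC ρU δU → IsComodComodObj k ρC ΔC εC ρW δW →
    ∀ i : U →ₗ[k] W, IsComodComodHom k ρU δU ρW δW i → Function.Injective i →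
    ∀ f : U →ₗ[k] V, IsComodComodHom k ρU δU ρV δV f →
    ∃ g : W →ₗ[k] V, IsComodComodHom k ρW δW ρV δV g ∧ g ∘ₗ i = f

/-- The diagonal `D`-coaction on `X ⊗ C` for a `D`-comodule `X`. -/
noncomputable def cofreeDCoact {X : Type u} [AddCommGroup X] [Module k X]
    (ρX : X →ₗ[k] D ⊗[k] X) (ρC : C →ₗ[k] D ⊗[k] C) :
    X ⊗[k] C →ₗ[k] D ⊗[k] (X ⊗[k] C) :=
  diagCoact k ρX ρC

/-- The right `C`-coaction `id_X ⊗ Δ` on `X ⊗ C`. -/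
noncomputable def cofreeCCoact {X : Type u} [AddCommGroup X] [Module k X]
    (ΔC : C →ₗ[k] C ⊗[k] C) :
    X ⊗[k] C →ₗ[k] (X ⊗[k] C) ⊗[k] C :=
  (TensorProduct.assoc k X C C).symm.toLinearMap ∘ₗ ΔC.lTensor X

end ComodComod

section AuxInj

variable {k : Type u} [Field k] {D C : Type u} [Ring D] [Bialgebra k D]
  [AddCommGroup C] [Module k C]

/-- Naturality of the diagonal coaction in the first tensor factor. -/
lemma diagCoact_natural {W X : Type u} [AddCommGroup W] [Module k W]
    [AddCommGroup X] [Module k X]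
    (ρW : W →ₗ[k] D ⊗[k] W) (ρX : X →ₗ[k] D ⊗[k] X) (ρC : C →ₗ[k] D ⊗[k] C)
    (g₀ : W →ₗ[k] X) (hg : ρX ∘ₗ g₀ = g₀.lTensor D ∘ₗ ρW) :
    diagCoact k ρX ρC ∘ₗ g₀.rTensor C
      = (g₀.rTensor C).lTensor D ∘ₗ diagCoact k ρW ρC := by
  apply TensorProduct.ext'
  intro w c
  have key : ∀ (p : D ⊗[k] W) (q : D ⊗[k] C),
      (LinearMap.mul' k D).rTensor (X ⊗[k] C)
        ((tensorTensorTensorComm k D X D C) ((g₀.lTensor D p) ⊗ₜ q))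
      = (g₀.rTensor C).lTensor D
          ((LinearMap.mul' k D).rTensor (W ⊗[k] C)
            ((tensorTensorTensorComm k D W D C) (p ⊗ₜ q))) := by
    intro p q
    induction p using TensorProduct.induction_on with
    | zero => simp
    | tmul d w =>
      induction q using TensorProduct.induction_on with
      | zero => simp
      | tmul e c => simp
      | add q₁ q₂ h₁ h₂ => simp only [tmul_add, map_add, h₁, h₂]
    | add p₁ p₂ h₁ h₂ => simp only [map_add, add_tmul, h₁, h₂]
  simp only [diagCoact, LinearMap.coe_comp, Function.comp_apply, LinearEquiv.coe_coe,
    LinearMap.rTensor_tmul, TensorProduct.map_tmul, LinearMap.id_coe, id_eq]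
  have hgw : ρX (g₀ w) = g₀.lTensor D (ρW w) := LinearMap.congr_fun hg w
  rw [hgw]
  exact key (ρW w) (ρC c)

/-- Applying `id_D ⊗ (id ⊗ ε)` to the diagonal coaction recovers the coaction of
the first factor, when the counit is colinear. -/
lemma proj_diagCoact {V : Type u} [AddCommGroup V] [Module k V]
    (ρV : V →ₗ[k] D ⊗[k] V) (ρC : C →ₗ[k] D ⊗[k] C) (εC : C →ₗ[k] k)
    (hcc : ∀ c : C, εC.lTensor D (ρC c) = εC c • ((1 : D) ⊗ₜ (1 : k))) :
    ((TensorProduct.rid k V).toLinearMap ∘ₗ εC.lTensor V).lTensor D ∘ₗ diagCoact k ρV ρC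
      = ρV ∘ₗ ((TensorProduct.rid k V).toLinearMap ∘ₗ εC.lTensor V) := by
  set proj : V ⊗[k] C →ₗ[k] V := (TensorProduct.rid k V).toLinearMap ∘ₗ εC.lTensor V with hproj
  set Φ : (D ⊗[k] V) ⊗[k] (D ⊗[k] k) →ₗ[k] D ⊗[k] V :=
    TensorProduct.map (LinearMap.mul' k D) (TensorProduct.rid k V).toLinearMap
      ∘ₗ (tensorTensorTensorComm k D V D k).toLinearMap with hΦ
  have key : ∀ (p : D ⊗[k] V) (q : D ⊗[k] C),
      proj.lTensor D ((LinearMap.mul' k D).rTensor (V ⊗[k] C)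
        ((tensorTensorTensorComm k D V D C) (p ⊗ₜ q)))
      = Φ (p ⊗ₜ (εC.lTensor D q)) := by
    intro p q
    induction p using TensorProduct.induction_on with
    | zero => simp
    | tmul d v =>
      induction q using TensorProduct.induction_on with
      | zero => simp
      | tmul e c =>
        simp only [hΦ, hproj, LinearMap.lTensor_tmul, LinearMap.rTensor_tmul,
          tensorTensorTensorComm_tmul, TensorProduct.map_tmul, LinearMap.mul'_apply,
          LinearMap.coe_comp, LinearEquiv.coe_coe, Function.comp_apply,
          TensorProduct.rid_tmul, LinearMap.id_coe, id_eq]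
      | add q₁ q₂ h₁ h₂ => simp only [tmul_add, map_add, h₁, h₂]
    | add p₁ p₂ h₁ h₂ => simp only [map_add, add_tmul, h₁, h₂]
  have Φone : ∀ p : D ⊗[k] V, Φ (p ⊗ₜ ((1 : D) ⊗ₜ (1 : k))) = p := by
    intro p
    induction p using TensorProduct.induction_on with
    | zero => simp
    | tmul d v => simp [hΦ]
    | add p₁ p₂ h₁ h₂ => simp only [add_tmul, map_add, h₁, h₂]
  apply TensorProduct.ext'
  intro v c
  have : proj (v ⊗ₜ c) = εC c • v := by
    simp [hproj]
  simp only [diagCoact, LinearMap.coe_comp, Function.comp_apply, LinearEquiv.coe_coe,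
    TensorProduct.map_tmul, this, map_smul]
  rw [key (ρV v) (ρC c), hcc c, tmul_smul, map_smul, Φone]

/-- Projecting the first `C` factor out with `ε` after associativity. -/
lemma proj_assoc_eq {V : Type u} [AddCommGroup V] [Module k V] (εC : C →ₗ[k] k) :
    (((TensorProduct.rid k V).toLinearMap ∘ₗ εC.lTensor V).rTensor C)
        ∘ₗ (TensorProduct.assoc k V C C).symm.toLinearMap
      = ((TensorProduct.lid k C).toLinearMap ∘ₗ εC.rTensor C).lTensor V := by
  apply TensorProduct.ext'
  intro v q
  induction q using TensorProduct.induction_on with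
  | zero => simp
  | tmul c₁ c₂ =>
    simp only [LinearMap.lTensor_tmul, LinearMap.rTensor_tmul, LinearMap.coe_comp,
      LinearEquiv.coe_coe, Function.comp_apply, TensorProduct.assoc_symm_tmul,
      TensorProduct.rid_tmul, TensorProduct.lid_tmul]
    exact TensorProduct.smul_tmul _ _ _
  | add q₁ q₂ h₁ h₂ => simp only [tmul_add, map_add, h₁, h₂]

/-- Naturality of the inverse associator. -/
lemma assoc_symm_natural {W X : Type u} [AddCommGroup W] [Module k W]
    [AddCommGroup X] [Module k X] (g₀ : W →ₗ[k] X) :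
    (TensorProduct.assoc k X C C).symm.toLinearMap ∘ₗ g₀.rTensor (C ⊗[k] C)
      = ((g₀.rTensor C).rTensor C) ∘ₗ (TensorProduct.assoc k W C C).symm.toLinearMap := by
  apply TensorProduct.ext'
  intro w q
  induction q using TensorProduct.induction_on with
  | zero => simp
  | tmul c₁ c₂ => simp
  | add q₁ q₂ h₁ h₂ => simp only [tmul_add, map_add, h₁, h₂]

end AuxInj

/-- Over a cosemisimple bialgebra `D`, for any left `D`-comodule `X`,
the object `X ⊗ C` with right `C`-coaction `id ⊗ Δ` and diagonal `D`-coaction is an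
injective object in the category of right `C`-comodules in left `D`-comodules. -/
theorem cofree_isInjObj
    {k D C : Type u} [Field k] [Ring D] [Bialgebra k D]
    [AddCommGroup C] [Module k C]
    (hcss : CosemisimpleCoalg k (Coalgebra.comul (R := k) (A := D))
      (Coalgebra.counit (R := k) (A := D)))
    (ρC : C →ₗ[k] D ⊗[k] C) (ΔC : C →ₗ[k] C ⊗[k] C) (εC : C →ₗ[k] k)
    (hC : IsCoalgInComod k ρC ΔC εC)
    {X : Type u} [AddCommGroup X] [Module k X]
    (ρX : X →ₗ[k] D ⊗[k] X)
    (hX : IsComod k ρX (Coalgebra.comul (R := k) (A := D)) (Coalgebra.counit (R := k) (A := D))) :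
    IsInjObj k ρC ΔC εC (cofreeDCoact k ρX ρC) (cofreeCCoact k ΔC) := by
  intro U _ _ W _ _ ρU δU ρW δW hU hW i hi hinj f hf
  set proj : X ⊗[k] C →ₗ[k] X := (TensorProduct.rid k X).toLinearMap ∘ₗ εC.lTensor X with hproj
  set f₀ : U →ₗ[k] X := proj ∘ₗ f with hf₀def
  -- `f₀` is `D`-colinear
  have hf₀ : ρX ∘ₗ f₀ = f₀.lTensor D ∘ₗ ρU := by
    have h1 : diagCoact k ρX ρC ∘ₗ f = f.lTensor D ∘ₗ ρU := hf.1
    calc ρX ∘ₗ f₀ = (ρX ∘ₗ proj) ∘ₗ f := by rw [hf₀def]; ext u; simp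
      _ = (proj.lTensor D ∘ₗ diagCoact k ρX ρC) ∘ₗ f := by
          rw [hproj, ← proj_diagCoact ρX ρC εC hC.counit_colinear]
      _ = proj.lTensor D ∘ₗ (f.lTensor D ∘ₗ ρU) := by
          rw [LinearMap.comp_assoc, h1]
      _ = f₀.lTensor D ∘ₗ ρU := by
          rw [hf₀def, ← LinearMap.comp_assoc, ← LinearMap.lTensor_comp]
  -- the adjunction: any map `C`-colinear into the cofree object is determined by
  -- its projection
  have adjoint : ∀ (V : Type u) [AddCommGroup V] [Module k V]
      (δV : V →ₗ[k] V ⊗[k] C) (h : V →ₗ[k] X ⊗[k] C),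
      cofreeCCoact k ΔC ∘ₗ h = h.rTensor C ∘ₗ δV →
      (proj ∘ₗ h).rTensor C ∘ₗ δV = h := by
    intro V _ _ δV h hcol
    have h2 : h.rTensor C ∘ₗ δV
        = (TensorProduct.assoc k X C C).symm.toLinearMap ∘ₗ ΔC.lTensor X ∘ₗ h := by
      rw [← hcol]; rfl
    calc (proj ∘ₗ h).rTensor C ∘ₗ δV
        = proj.rTensor C ∘ₗ (h.rTensor C ∘ₗ δV) := by
          rw [LinearMap.rTensor_comp, LinearMap.comp_assoc]
      _ = (proj.rTensor C ∘ₗ (TensorProduct.assoc k X C C).symm.toLinearMap)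
            ∘ₗ ΔC.lTensor X ∘ₗ h := by
          rw [h2, LinearMap.comp_assoc]
      _ = (((TensorProduct.lid k C).toLinearMap ∘ₗ εC.rTensor C).lTensor X)
            ∘ₗ ΔC.lTensor X ∘ₗ h := by rw [hproj, proj_assoc_eq]
      _ = (((TensorProduct.lid k C).toLinearMap ∘ₗ εC.rTensor C ∘ₗ ΔC).lTensor X) ∘ₗ h := by
          rw [← LinearMap.comp_assoc, ← LinearMap.lTensor_comp, LinearMap.comp_assoc]
      _ = h := by
          rw [hC.coalg.counit]
          ext v; simp
  -- the image of `i` is a `D`-subcomodule of `W`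
  set e : U ≃ₗ[k] LinearMap.range i := LinearEquiv.ofInjective i hinj with he
  have hie : ∀ u : U, ((e u : W)) = i u := fun u => rfl
  have hsub : IsSubcomod k ρW (LinearMap.range i) := by
    intro w hw
    obtain ⟨u, rfl⟩ := hw
    have : ρW (i u) = i.lTensor D (ρU u) := LinearMap.congr_fun hi.1 u
    rw [this]
    refine ⟨(e.toLinearMap.lTensor D) (ρU u), ?_⟩
    rw [← LinearMap.comp_apply, ← LinearMap.lTensor_comp]
    congr 1
  -- choose a complementary subcomodule
  obtain ⟨W', hcompl, hW'⟩ := hcss W ρW hW.1 (LinearMap.range i) hsub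
  -- build the `D`-colinear extension `g₀ : W → X` of `f₀`
  set π : W →ₗ[k] LinearMap.range i := (LinearMap.range i).projectionOnto W' hcompl
    with hπ
  set g₀ : W →ₗ[k] X := f₀ ∘ₗ e.symm.toLinearMap ∘ₗ π with hg₀
  have hg₀i : g₀ ∘ₗ i = f₀ := by
    ext u
    have h3 : π (i u) = e u := by
      have h := Submodule.linearProjOfIsCompl_apply_left hcompl (e u)
      rwa [hie u] at h
    simp only [hg₀, LinearMap.comp_apply, h3, LinearEquiv.coe_coe, LinearEquiv.symm_apply_apply]
  have hg₀W' : ∀ w ∈ W', g₀ w = 0 := by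
    intro w hw
    simp only [hg₀, LinearMap.comp_apply, hπ,
      Submodule.projectionOnto_apply_of_mem_right hcompl hw]
    simp
  -- `g₀` is `D`-colinear
  have hg₀col : ρX ∘ₗ g₀ = g₀.lTensor D ∘ₗ ρW := by
    ext w
    have hmem : w ∈ LinearMap.range i ⊔ W' := by rw [hcompl.sup_eq_top]; trivial
    obtain ⟨a, ha, b, hb, rfl⟩ := Submodule.mem_sup.1 hmem
    obtain ⟨u, rfl⟩ := ha
    have hg₀b : g₀ b = 0 := hg₀W' b hb
    have hgb : g₀.lTensor D (ρW b) = 0 := by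
      obtain ⟨t, ht⟩ := hW' b hb
      rw [← ht, ← LinearMap.comp_apply, ← LinearMap.lTensor_comp]
      have : g₀ ∘ₗ W'.subtype = 0 := by
        ext x; exact hg₀W' x x.2
      rw [this]
      simp
    have hgi : ρW (i u) = i.lTensor D (ρU u) := LinearMap.congr_fun hi.1 u
    have hfi : ρX (f₀ u) = f₀.lTensor D (ρU u) := LinearMap.congr_fun hf₀ u
    simp only [LinearMap.comp_apply, map_add, hg₀b, hgb, map_zero, add_zero]
    rw [show g₀ (i u) = f₀ u from LinearMap.congr_fun hg₀i u, hfi, hgi]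
    have h5 : (g₀.lTensor D) ((i.lTensor D) (ρU u)) = (g₀ ∘ₗ i).lTensor D (ρU u) := by
      rw [LinearMap.lTensor_comp D g₀ i]; rfl
    rw [h5, hg₀i]
  -- the candidate extension
  refine ⟨(g₀.rTensor C) ∘ₗ δW, ⟨?_, ?_⟩, ?_⟩
  · -- `D`-colinearity of `g`
    calc cofreeDCoact k ρX ρC ∘ₗ g₀.rTensor C ∘ₗ δW
        = (diagCoact k ρX ρC ∘ₗ g₀.rTensor C) ∘ₗ δW := by
          rw [cofreeDCoact, LinearMap.comp_assoc]
      _ = (g₀.rTensor C).lTensor D ∘ₗ (diagCoact k ρW ρC ∘ₗ δW) := by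
          rw [diagCoact_natural ρW ρX ρC g₀ hg₀col, LinearMap.comp_assoc]
      _ = (g₀.rTensor C).lTensor D ∘ₗ (δW.lTensor D ∘ₗ ρW) := by rw [hW.2.2]
      _ = (g₀.rTensor C ∘ₗ δW).lTensor D ∘ₗ ρW := by
          rw [← LinearMap.comp_assoc, ← LinearMap.lTensor_comp]
  · -- `C`-colinearity of `g`
    have hco : ΔC.lTensor W ∘ₗ δW
        = (TensorProduct.assoc k W C C).toLinearMap ∘ₗ δW.rTensor C ∘ₗ δW :=
      hW.2.1.coassoc
    have hco' : (TensorProduct.assoc k W C C).symm.toLinearMap ∘ₗ ΔC.lTensor W ∘ₗ δW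
        = δW.rTensor C ∘ₗ δW := by
      rw [hco, ← LinearMap.comp_assoc]
      convert LinearMap.id_comp (δW.rTensor C ∘ₗ δW) using 2
      ext x; simp
    calc cofreeCCoact k ΔC ∘ₗ g₀.rTensor C ∘ₗ δW
        = (TensorProduct.assoc k X C C).symm.toLinearMap
            ∘ₗ (ΔC.lTensor X ∘ₗ g₀.rTensor C) ∘ₗ δW := by
          rw [cofreeCCoact]
          simp only [LinearMap.comp_assoc]
      _ = ((TensorProduct.assoc k X C C).symm.toLinearMap ∘ₗ g₀.rTensor (C ⊗[k] C))
            ∘ₗ ΔC.lTensor W ∘ₗ δW := by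
          rw [LinearMap.lTensor_comp_rTensor, ← LinearMap.rTensor_comp_lTensor]
          simp only [LinearMap.comp_assoc]
      _ = ((g₀.rTensor C).rTensor C)
            ∘ₗ (TensorProduct.assoc k W C C).symm.toLinearMap ∘ₗ ΔC.lTensor W ∘ₗ δW := by
          rw [assoc_symm_natural g₀]
          simp only [LinearMap.comp_assoc]
      _ = (g₀.rTensor C).rTensor C ∘ₗ δW.rTensor C ∘ₗ δW := by
          rw [hco']
      _ = (g₀.rTensor C ∘ₗ δW).rTensor C ∘ₗ δW := by
          rw [← LinearMap.comp_assoc, ← LinearMap.rTensor_comp]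
  · -- `g ∘ i = f`
    calc (g₀.rTensor C ∘ₗ δW) ∘ₗ i
        = g₀.rTensor C ∘ₗ (δW ∘ₗ i) := by rw [LinearMap.comp_assoc]
      _ = g₀.rTensor C ∘ₗ i.rTensor C ∘ₗ δU := by rw [hi.2]
      _ = (g₀ ∘ₗ i).rTensor C ∘ₗ δU := by
          rw [← LinearMap.comp_assoc, ← LinearMap.rTensor_comp]
      _ = f₀.rTensor C ∘ₗ δU := by rw [hg₀i]
      _ = f := adjoint U δU f hf.2
end
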